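/- arXiv:math/9901151 — 7 statements merged into one kernel-verified Lean document; each statement's English description precedes it below -/
import Mathlib

section
/- Let a ∈ G∖N and n ∈ N. Then: (1) N(na) = nN(a) and N(an) = N(a)n; (2) N(b⁻¹ab) = b⁻¹N(a)b for all b ∈ G; (3) N(a) ≠ ∅; (4) if n ∈ N(a) then n⁻¹ ∉ N(a⁻¹); (5) there exists a' ∈ Na with 1 ∈ N(a'). -/
open scoped Pointwise

/-- The subset of `D` consisting of (the values of) the units belonging to `N`. -/
def unitsSet {D : Type*} [DivisionRing D] (N : Subgroup Dˣ) : Set D :=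
  Units.val '' (N : Set Dˣ)

/-- For `a : D`, the set `N(a) = {n ∈ N : a + n ∈ N}`. -/
def nSet {D : Type*} [DivisionRing D] (N : Subgroup Dˣ) (a : D) : Set D :=
  {x : D | x ∈ unitsSet N ∧ a + x ∈ unitsSet N}

/-- The commuting graph of a group: vertices are the nonidentity elements,
two distinct nonidentity elements are adjacent iff they commute. (The identity is
an isolated vertex.) -/
def commGraph (Q : Type*) [Group Q] : SimpleGraph Q where
  Adj a b := a ≠ b ∧ a ≠ 1 ∧ b ≠ 1 ∧ a * b = b * a
  symm := by
    constructor
    intro a b h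
    exact ⟨Ne.symm h.1, h.2.2.1, h.2.1, h.2.2.2.symm⟩
  loopless := by constructor; intro a h; exact h.1 rfl

/-- `distGT Γ u v k` : there is no path (walk) of length at most `k` from `u` to `v`,
i.e. `d(u,v) > k`. -/
def distGT {Q : Type*} (Γ : SimpleGraph Q) (u v : Q) (k : ℕ) : Prop :=
  ∀ p : Γ.Walk u v, k < p.length

/-! ### Auxiliary material: infinite Ramsey for pairs (via ultrafilters), piecewise
syndeticity, and the Bergelson–Shapiro theorem `D = N - N`. -/

section Aux

/-- Infinite Ramsey theorem for pairs, proved with the hyperfilter on `ℕ`. -/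
private theorem ramsey_pairs {κ : Type*} [Finite κ] (f : ℕ → ℕ → κ) :
    ∃ (g : ℕ → ℕ) (K : κ), (∀ i j, i < j → g i < g j) ∧ ∀ i j, i < j → f (g i) (g j) = K := by
  classical
  set U : Ultrafilter ℕ := Filter.hyperfilter ℕ with hU
  have base : ∀ h : ℕ → κ, ∃ k, {x | h x = k} ∈ U := by
    intro h
    by_contra hc
    push_neg at hc
    have h1 : ∀ k : κ, {x | h x = k}ᶜ ∈ U := fun k => Ultrafilter.compl_mem_iff_notMem.2 (hc k)
    have h2 : (⋂ k : κ, {x | h x = k}ᶜ) ∈ U := by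
      rw [← Ultrafilter.mem_coe]
      exact Filter.iInter_mem.2 fun k => (Ultrafilter.mem_coe).2 (h1 k)
    obtain ⟨x, hx⟩ := Ultrafilter.nonempty_of_mem h2
    simp only [Set.mem_iInter, Set.mem_compl_iff, Set.mem_setOf_eq] at hx
    exact hx (h x) rfl
  obtain ⟨kf, hkf⟩ : ∃ kf : ℕ → κ, ∀ a, {x | f a x = kf a} ∈ U :=
    ⟨fun a => (base (f a)).choose, fun a => (base (f a)).choose_spec⟩
  obtain ⟨K, hK⟩ := base kf
  have hIoi : ∀ b : ℕ, {x | b < x} ∈ U := by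
    intro b
    apply Filter.mem_hyperfilter_of_finite_compl
    have : {x : ℕ | b < x}ᶜ = Set.Iic b := by
      ext x; simp [Set.mem_compl_iff, Nat.not_lt]
    rw [this]; exact Set.finite_Iic b
  have hinter : ∀ {s t : Set ℕ}, s ∈ U → t ∈ U → s ∩ t ∈ U := by
    intro s t hs ht
    rw [← Ultrafilter.mem_coe] at hs ht ⊢
    exact Filter.inter_mem hs ht
  let St := {p : ℕ × Set ℕ //
    p.2 ∈ U ∧ (∀ x ∈ p.2, kf x = K) ∧ (∀ x ∈ p.2, f p.1 x = K) ∧ ∀ x ∈ p.2, p.1 < x}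
  have hstep : ∀ s : St, ∃ t : St, t.1.1 ∈ s.1.2 ∧ t.1.2 ⊆ s.1.2 := by
    rintro ⟨⟨a, S⟩, hS, h2, h3, h4⟩
    obtain ⟨b, hb⟩ := Ultrafilter.nonempty_of_mem hS
    have hfib : {x | f b x = K} ∈ U := by
      have := hkf b
      rwa [h2 b hb] at this
    refine ⟨⟨⟨b, S ∩ ({x | f b x = K} ∩ {x | b < x})⟩, ?_, ?_, ?_, ?_⟩, hb, fun x hx => hx.1⟩
    · exact hinter hS (hinter hfib (hIoi b))
    · exact fun x hx => h2 x hx.1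
    · exact fun x hx => hx.2.1
    · exact fun x hx => hx.2.2
  choose step hstep1 hstep2 using hstep
  obtain ⟨a0, ha0⟩ := Ultrafilter.nonempty_of_mem hK
  have hfib0 : {x | f a0 x = K} ∈ U := by
    have := hkf a0
    rwa [show kf a0 = K from ha0] at this
  let s0 : St := ⟨⟨a0, {x | kf x = K} ∩ ({x | f a0 x = K} ∩ {x | a0 < x})⟩,
    hinter hK (hinter hfib0 (hIoi a0)),
    fun x hx => hx.1, fun x hx => hx.2.1, fun x hx => hx.2.2⟩
  let ch : ℕ → St := fun n => Nat.rec s0 (fun _ ih => step ih) n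
  have chsucc : ∀ n, ch (n + 1) = step (ch n) := fun n => rfl
  have hsub : ∀ i j, i ≤ j → (ch j).1.2 ⊆ (ch i).1.2 := by
    intro i j hij
    induction hij with
    | refl => exact subset_rfl
    | @step m hm ih =>
        refine subset_trans ?_ ih
        rw [chsucc m]
        exact hstep2 (ch m)
  have key : ∀ i j, i < j → (ch j).1.1 ∈ (ch i).1.2 := by
    intro i j hij
    obtain ⟨m, rfl⟩ : ∃ m, j = m + 1 := ⟨j - 1, by omega⟩
    have h1 : (ch (m + 1)).1.1 ∈ (ch m).1.2 := by
      rw [chsucc m]; exact hstep1 (ch m)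
    exact hsub i m (by omega) h1
  refine ⟨fun n => (ch n).1.1, K, ?_, ?_⟩
  · intro i j hij
    exact (ch i).2.2.2.2 _ (key i j hij)
  · intro i j hij
    exact (ch i).2.2.2.1 _ (key i j hij)

variable {D : Type*} [DivisionRing D]

/-- `S` is (additively) thick. -/
private def thk (S : Set D) : Prop := ∀ F : Finset D, ∃ t : D, ∀ f ∈ F, f + t ∈ S

/-- The set `E + C`. -/
private def tset (E : Finset D) (C : Set D) : Set D := {x | ∃ e ∈ E, ∃ c ∈ C, x = e + c}

/-- `C` is (additively) piecewise syndetic. -/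
private def ps (C : Set D) : Prop := ∃ E : Finset D, thk (tset E C)

private lemma ps_univ : ps (Set.univ : Set D) := by
  refine ⟨{0}, fun F => ⟨0, fun f hf => ⟨0, Finset.mem_singleton_self 0, f + 0, trivial, ?_⟩⟩⟩
  abel

private lemma ps_union {A B : Set D} (h : ps (A ∪ B)) : ps A ∨ ps B := by
  classical
  by_cases hA : ps A
  · exact Or.inl hA
  right
  obtain ⟨E, hE⟩ := h
  have hnt : ¬ thk (tset E A) := fun ht => hA ⟨E, ht⟩
  unfold thk at hnt
  push_neg at hnt
  obtain ⟨F₁, hF₁⟩ := hnt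
  refine ⟨(E ×ˢ F₁).image (fun p => p.1 - p.2), ?_⟩
  intro F
  obtain ⟨t, ht⟩ := hE ((F₁ ×ˢ F).image (fun p => p.1 + p.2))
  refine ⟨t, fun φ hφ => ?_⟩
  obtain ⟨g, hg, hnot⟩ := hF₁ (φ + t)
  have hmem : g + φ ∈ (F₁ ×ˢ F).image (fun p => p.1 + p.2) :=
    Finset.mem_image.2 ⟨⟨g, φ⟩, Finset.mem_product.2 ⟨hg, hφ⟩, rfl⟩
  obtain ⟨e, he, c, hc, hEq⟩ := ht _ hmem
  have hEq' : g + (φ + t) = e + c := by rw [← add_assoc]; exact hEq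
  rcases hc with hcA | hcB
  · exact absurd ⟨e, he, c, hcA, hEq'⟩ hnot
  · refine ⟨e - g, Finset.mem_image.2 ⟨⟨e, g⟩, Finset.mem_product.2 ⟨he, hg⟩, rfl⟩, c, hcB, ?_⟩
    have h3 : φ + t = e + c - g := eq_sub_iff_add_eq'.2 hEq'
    rw [h3]; abel

private lemma mem_foldr_of_mem {x : D} : ∀ (l : List (Set D)) (C : Set D),
    C ∈ l → x ∈ C → x ∈ l.foldr (· ∪ ·) ∅ := by
  intro l
  induction l with
  | nil => intro C hC _; exact absurd hC List.not_mem_nil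
  | cons C' l ih =>
      intro C hC hx
      rcases List.mem_cons.1 hC with rfl | hC'
      · exact Or.inl hx
      · exact Or.inr (ih C hC' hx)

private lemma ps_of_cover : ∀ l : List (Set D), ps (l.foldr (· ∪ ·) ∅) → ∃ C ∈ l, ps C := by
  intro l
  induction l with
  | nil =>
      intro h
      exfalso
      obtain ⟨E, hE⟩ := h
      obtain ⟨t, ht⟩ := hE {0}
      obtain ⟨e, _, c, hc, _⟩ := ht 0 (Finset.mem_singleton_self 0)
      exact hc
  | cons C l ih =>
      intro h
      rcases ps_union h with h1 | h2
      · exact ⟨C, List.mem_cons_self, h1⟩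
      · obtain ⟨C', hC', hps⟩ := ih h2
        exact ⟨C', List.mem_cons_of_mem _ hC', hps⟩

private lemma thk_smul (k : D) (hk : k ≠ 0) (E : Finset D) (S : Set D)
    (h : thk (tset E ((fun y => k * y) '' S))) :
    ∃ E' : Finset D, thk (tset E' S) := by
  classical
  refine ⟨E.image (fun e => k⁻¹ * e), ?_⟩
  intro F
  obtain ⟨t, ht⟩ := h (F.image (fun x => k * x))
  refine ⟨k⁻¹ * t, fun φ hφ => ?_⟩
  obtain ⟨e, he, c, hc, hEq⟩ := ht (k * φ) (Finset.mem_image_of_mem _ hφ)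
  obtain ⟨s, hs, rfl⟩ := hc
  refine ⟨k⁻¹ * e, Finset.mem_image_of_mem _ he, s, hs, ?_⟩
  have h2 := congrArg (fun z => k⁻¹ * z) hEq
  simp only [mul_add, ← mul_assoc, inv_mul_cancel₀ hk, one_mul] at h2
  exact h2

private lemma mem_unitsSet {N : Subgroup Dˣ} {x : D} :
    x ∈ unitsSet N ↔ ∃ u : Dˣ, u ∈ N ∧ (u : D) = x := by
  constructor
  · rintro ⟨u, hu, rfl⟩
    exact ⟨u, hu, rfl⟩
  · rintro ⟨u, hu, rfl⟩
    exact ⟨u, hu, rfl⟩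

private lemma add_conj (c d u v w : Dˣ) (h : (u : D) + (v : D) = (w : D)) :
    ((c * u * d : Dˣ) : D) + ((c * v * d : Dˣ) : D) = ((c * w * d : Dˣ) : D) := by
  simp only [Units.val_mul]
  rw [← h, mul_add, add_mul]

/-- The subset of `D` of values of units in the class `q`. -/
private def SqD (N : Subgroup Dˣ) (q : Dˣ ⧸ N) : Set D :=
  {x : D | ∃ u : Dˣ, (u : Dˣ ⧸ N) = q ∧ (u : D) = x}

/-- **Bergelson–Shapiro**: in an infinite division ring, for a finite-index normal
subgroup `N` of `Dˣ`, every element of `Dˣ` is a difference of two elements of `N`. -/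
private lemma BS [Infinite D] (N : Subgroup Dˣ) [N.Normal]
    (hfin : Finite (Dˣ ⧸ N)) (a : Dˣ) :
    ∃ p q : Dˣ, p ∈ N ∧ q ∈ N ∧ (a : D) = (p : D) - (q : D) := by
  classical
  haveI := hfin
  -- Step 1: `unitsSet N` is piecewise syndetic.
  obtain ⟨E', hE'⟩ : ∃ E' : Finset D, thk (tset E' (unitsSet N)) := by
    haveI : Fintype (Dˣ ⧸ N) := Fintype.ofFinite _
    have hcov : (Set.univ : Set D)
        = (({0} : Set D) :: (Finset.univ.toList.map (SqD N))).foldr (· ∪ ·) ∅ := by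
      apply Set.eq_of_subset_of_subset
      · intro x _
        by_cases hx : x = 0
        · exact mem_foldr_of_mem _ (({0} : Set D)) List.mem_cons_self (by simp [hx])
        · refine mem_foldr_of_mem _ (SqD N ((Units.mk0 x hx : Dˣ) : Dˣ ⧸ N)) ?_ ?_
          · exact List.mem_cons_of_mem _ (List.mem_map.2
              ⟨_, Finset.mem_toList.2 (Finset.mem_univ _), rfl⟩)
          · exact ⟨Units.mk0 x hx, rfl, rfl⟩
      · intro x _; trivial
    obtain ⟨C, hCl, hpsC⟩ := ps_of_cover (({0} : Set D) :: (Finset.univ.toList.map (SqD N)))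
        (by rw [← hcov]; exact ps_univ)
    rcases List.mem_cons.1 hCl with rfl | hCl'
    · -- the `{0}` piece cannot be piecewise syndetic since `D` is infinite
      exfalso
      obtain ⟨E, hE⟩ := hpsC
      obtain ⟨t, ht⟩ := hE ((Finset.range (E.card + 1)).map (Infinite.natEmbedding D))
      have hmaps : ∀ x ∈ (Finset.range (E.card + 1)).map (Infinite.natEmbedding D),
          x + t ∈ E := by
        intro x hx
        obtain ⟨e, he, c, hc, hEq⟩ := ht x hx
        have hc0 : c = 0 := hc
        rw [hEq, hc0, add_zero]
        exact he
      obtain ⟨x, hx, y, hy, hxy, hEqxy⟩ :=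
        Finset.exists_ne_map_eq_of_card_lt_of_maps_to
          (by rw [Finset.card_map, Finset.card_range]; omega) hmaps
      exact hxy (add_right_cancel hEqxy)
    · -- a coset piece: transport to `unitsSet N`
      obtain ⟨q, _, rfl⟩ := List.mem_map.1 hCl'
      obtain ⟨cq, rfl⟩ := QuotientGroup.mk_surjective q
      obtain ⟨E, hE⟩ := hpsC
      have hSqEq : SqD N ((cq : Dˣ ⧸ N)) = (fun y => (cq : D) * y) '' unitsSet N := by
        ext x
        constructor
        · rintro ⟨u, hu, rfl⟩
          refine ⟨((cq⁻¹ * u : Dˣ) : D), ⟨cq⁻¹ * u, ?_, rfl⟩, ?_⟩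
          · show cq⁻¹ * u ∈ N
            rw [← QuotientGroup.eq_one_iff]
            rw [QuotientGroup.mk_mul, QuotientGroup.mk_inv, hu]
            group
          · show (cq : D) * ((cq⁻¹ * u : Dˣ) : D) = (u : D)
            rw [← Units.val_mul]
            exact congrArg Units.val (by group)
        · rintro ⟨y, ⟨v, hv, rfl⟩, rfl⟩
          refine ⟨cq * v, ?_, Units.val_mul _ _⟩
          rw [QuotientGroup.mk_mul, (QuotientGroup.eq_one_iff v).2 hv, mul_one]
      rw [hSqEq] at hE
      exact thk_smul (cq : D) (Units.ne_zero cq) E _ hE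
  -- Step 2: an "N-spread" sequence via Ramsey.
  set x : ℕ → D := fun n => Infinite.natEmbedding D n with hxdef
  have hxinj : Function.Injective x := by
    rw [hxdef]
    exact (Infinite.natEmbedding D).injective
  set f : ℕ → ℕ → (Dˣ ⧸ N) := fun i j =>
    if h : x j - x i = 0 then (1 : Dˣ ⧸ N) else ((Units.mk0 (x j - x i) h : Dˣ) : Dˣ ⧸ N)
    with hf
  obtain ⟨g, K, hgmono, hgcol⟩ := ramsey_pairs f
  have hyne : ∀ i j, i < j → x (g j) - x (g i) ≠ 0 := by
    intro i j hij
    refine sub_ne_zero_of_ne ?_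
    intro hEq
    have h1 : g j = g i := hxinj hEq
    have h2 := hgmono i j hij
    omega
  have hycol : ∀ i j (hij : i < j),
      ((Units.mk0 (x (g j) - x (g i)) (hyne i j hij) : Dˣ) : Dˣ ⧸ N) = K := by
    intro i j hij
    have h1 := hgcol i j hij
    simp only [hf, dif_neg (hyne i j hij)] at h1
    exact h1
  set δu : Dˣ := Units.mk0 (x (g 1) - x (g 0)) (hyne 0 1 Nat.zero_lt_one) with hδu
  have hδK : ((δu : Dˣ) : Dˣ ⧸ N) = K := hycol 0 1 Nat.zero_lt_one
  set P : ℕ → D := fun i => ((δu⁻¹ : Dˣ) : D) * (x (g (i + 1)) - x (g 0)) with hP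
  have hdiff : ∀ i j, j < i → ∃ w : Dˣ, w ∈ N ∧ (w : D) = P i - P j := by
    intro i j hij
    have hij' : j + 1 < i + 1 := by omega
    refine ⟨δu⁻¹ * Units.mk0 (x (g (i + 1)) - x (g (j + 1))) (hyne (j + 1) (i + 1) hij'),
      ?_, ?_⟩
    · rw [← QuotientGroup.eq_one_iff]
      rw [QuotientGroup.mk_mul, QuotientGroup.mk_inv, hδK, hycol (j + 1) (i + 1) hij']
      group
    · rw [Units.val_mul]
      have h1 : ((Units.mk0 (x (g (i + 1))- x (g (j + 1))) (hyne (j + 1) (i + 1) hij') : Dˣ) : D)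
          = x (g (i + 1)) - x (g (j + 1)) := rfl
      rw [h1]
      simp only [hP, mul_sub]
      abel
  -- Step 3: pigeonhole along the thick set.
  set L : ℕ := E'.card + 1 with hL
  obtain ⟨t, ht⟩ := hE' ((Finset.range L).image (fun i => P i * (a : D)))
  have h1 : ∀ i ∈ Finset.range L, (P i * (a : D) + t) ∈ tset E' (unitsSet N) :=
    fun i hi => ht _ (Finset.mem_image_of_mem _ hi)
  have h2 : ∀ i : ℕ, ∃ e : D, i ∈ Finset.range L →
      e ∈ E' ∧ ∃ c ∈ unitsSet N, P i * (a : D) + t = e + c := by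
    intro i
    by_cases hi : i ∈ Finset.range L
    · obtain ⟨e, he, c, hc, hEq⟩ := h1 i hi
      exact ⟨e, fun _ => ⟨he, c, hc, hEq⟩⟩
    · exact ⟨0, fun h => absurd h hi⟩
  choose ef hef using h2
  have main : ∀ i j, i ∈ Finset.range L → j ∈ Finset.range L → j < i → ef i = ef j →
      ∃ p q : Dˣ, p ∈ N ∧ q ∈ N ∧ (a : D) = (p : D) - (q : D) := by
    intro i j hi hj hij hefeq
    obtain ⟨hei, ci, hci, hEqi⟩ := hef i hi
    obtain ⟨hej, cj, hcj, hEqj⟩ := hef j hj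
    obtain ⟨γi, hγi, rfl⟩ := mem_unitsSet.1 hci
    obtain ⟨γj, hγj, rfl⟩ := mem_unitsSet.1 hcj
    obtain ⟨w, hw, hwval⟩ := hdiff i j hij
    have hkey : (w : D) * (a : D) = (γi : D) - (γj : D) := by
      rw [hwval]
      have h3 : (P i * (a : D) + t) - (P j * (a : D) + t)
          = (ef i + (γi : D)) - (ef j + (γj : D)) := by rw [hEqi, hEqj]
      rw [hefeq] at h3
      rw [sub_mul]
      calc P i * (a : D) - P j * (a : D)
          = (P i * (a : D) + t) - (P j * (a : D) + t) := by abel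
        _ = (ef j + (γi : D)) - (ef j + (γj : D)) := h3
        _ = (γi : D) - (γj : D) := by abel
    refine ⟨w⁻¹ * γi, w⁻¹ * γj, N.mul_mem (N.inv_mem hw) hγi, N.mul_mem (N.inv_mem hw) hγj, ?_⟩
    rw [Units.val_mul, Units.val_mul, ← mul_sub, ← hkey, ← mul_assoc, Units.inv_mul, one_mul]
  obtain ⟨i, hi, j, hj, hne, hefeq⟩ :=
    Finset.exists_ne_map_eq_of_card_lt_of_maps_to
      (s := Finset.range L) (t := E')
      (by rw [Finset.card_range]; omega) (fun i hi => (hef i hi).1)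
  rcases hne.lt_or_gt with hlt | hlt
  · exact main j i hj hi hlt hefeq.symm
  · exact main i j hi hj hlt hefeq

end Aux

/-- Basic properties of the sets `N(a)` for `a ∈ G∖N`, `n ∈ N`. -/
theorem stmt_1 {D : Type*} [DivisionRing D] [Infinite D] (N : Subgroup Dˣ)
    [N.Normal] (hF : ∀ x : Dˣ, (x : D) ∈ Set.center D → x ∈ N)
    (hfin : Finite (Dˣ ⧸ N))
    (a : Dˣ) (ha : a ∉ N) (n : Dˣ) (hn : n ∈ N) :
    -- (1) N(na) = nN(a) and N(an) = N(a)n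
    (nSet N ((n * a : Dˣ) : D) = (fun t => (n : D) * t) '' nSet N (a : D) ∧
      nSet N ((a * n : Dˣ) : D) = (fun t => t * (n : D)) '' nSet N (a : D)) ∧
    -- (2) N(b⁻¹ab) = b⁻¹N(a)b for all b ∈ G
    (∀ b : Dˣ, nSet N ((b⁻¹ * a * b : Dˣ) : D)
        = (fun t => (b : D)⁻¹ * t * (b : D)) '' nSet N (a : D)) ∧
    -- (3) N(a) ≠ ∅
    (nSet N (a : D)).Nonempty ∧
    -- (4) if n ∈ N(a) then n⁻¹ ∉ N(a⁻¹)
    (∀ t : D, t ∈ nSet N (a : D) → t⁻¹ ∉ nSet N ((a⁻¹ : Dˣ) : D)) ∧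
    -- (5) there exists a' ∈ Na with 1 ∈ N(a')
    (∃ a' : Dˣ, (∃ m ∈ N, a' = m * a) ∧ (1 : D) ∈ nSet N (a' : D)) := by
  obtain ⟨p, q, hp, hq, hpq⟩ := BS N hfin a
  refine ⟨⟨?_, ?_⟩, ?_, ?_, ?_, ?_⟩
  · -- (1) left
    ext z
    constructor
    · rintro ⟨⟨ξ, hξ, hξv⟩, hz2⟩
      obtain ⟨μ, hμ, hμv⟩ := hz2
      rw [← hξv] at hμv
      have hsum : ((n * a : Dˣ) : D) + (ξ : D) = (μ : D) := hμv.symm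
      have h2 := add_conj n⁻¹ 1 (n * a) ξ μ hsum
      have e1 : n⁻¹ * (n * a) * 1 = a := by group
      have e2 : n⁻¹ * ξ * 1 = n⁻¹ * ξ := by group
      have e3 : n⁻¹ * μ * 1 = n⁻¹ * μ := by group
      rw [e1, e2, e3] at h2
      refine ⟨((n⁻¹ * ξ : Dˣ) : D),
        ⟨⟨n⁻¹ * ξ, N.mul_mem (N.inv_mem hn) hξ, rfl⟩,
         ⟨n⁻¹ * μ, N.mul_mem (N.inv_mem hn) hμ, h2.symm⟩⟩, ?_⟩
      show (n : D) * ((n⁻¹ * ξ : Dˣ) : D) = z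
      rw [← Units.val_mul, ← hξv]
      exact congrArg Units.val (by group)
    · rintro ⟨w, ⟨⟨τ, hτ, hτv⟩, hw2⟩, rfl⟩
      obtain ⟨μ, hμ, hμv⟩ := hw2
      rw [← hτv] at hμv
      have hsum : ((a : Dˣ) : D) + (τ : D) = (μ : D) := hμv.symm
      have h2 := add_conj n 1 a τ μ hsum
      have e1 : n * a * 1 = n * a := by group
      have e2 : n * τ * 1 = n * τ := by group
      have e3 : n * μ * 1 = n * μ := by group
      rw [e1, e2, e3] at h2
      constructor
      · exact ⟨n * τ, N.mul_mem hn hτ, by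
          show ((n * τ : Dˣ) : D) = (n : D) * w
          rw [Units.val_mul, hτv]⟩
      · refine ⟨n * μ, N.mul_mem hn hμ, ?_⟩
        show ((n * μ : Dˣ) : D) = ((n * a : Dˣ) : D) + (n : D) * w
        rw [← h2, ← hτv, ← Units.val_mul]
  · -- (1) right
    ext z
    constructor
    · rintro ⟨⟨ξ, hξ, hξv⟩, hz2⟩
      obtain ⟨μ, hμ, hμv⟩ := hz2
      rw [← hξv] at hμv
      have hsum : ((a * n : Dˣ) : D) + (ξ : D) = (μ : D) := hμv.symm
      have h2 := add_conj 1 n⁻¹ (a * n) ξ μ hsum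
      have e1 : 1 * (a * n) * n⁻¹ = a := by group
      have e2 : 1 * ξ * n⁻¹ = ξ * n⁻¹ := by group
      have e3 : 1 * μ * n⁻¹ = μ * n⁻¹ := by group
      rw [e1, e2, e3] at h2
      refine ⟨((ξ * n⁻¹ : Dˣ) : D),
        ⟨⟨ξ * n⁻¹, N.mul_mem hξ (N.inv_mem hn), rfl⟩,
         ⟨μ * n⁻¹, N.mul_mem hμ (N.inv_mem hn), h2.symm⟩⟩, ?_⟩
      show ((ξ * n⁻¹ : Dˣ) : D) * (n : D) = z
      rw [← Units.val_mul, ← hξv]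
      exact congrArg Units.val (by group)
    · rintro ⟨w, ⟨⟨τ, hτ, hτv⟩, hw2⟩, rfl⟩
      obtain ⟨μ, hμ, hμv⟩ := hw2
      rw [← hτv] at hμv
      have hsum : ((a : Dˣ) : D) + (τ : D) = (μ : D) := hμv.symm
      have h2 := add_conj 1 n a τ μ hsum
      have e1 : 1 * a * n = a * n := by group
      have e2 : 1 * τ * n = τ * n := by group
      have e3 : 1 * μ * n = μ * n := by group
      rw [e1, e2, e3] at h2
      constructor
      · exact ⟨τ * n, N.mul_mem hτ hn, by
          show ((τ * n : Dˣ) : D) = w * (n : D)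
          rw [Units.val_mul, hτv]⟩
      · refine ⟨μ * n, N.mul_mem hμ hn, ?_⟩
        show ((μ * n : Dˣ) : D) = ((a * n : Dˣ) : D) + w * (n : D)
        rw [← h2, ← hτv, ← Units.val_mul]
  · -- (2)
    intro b
    have hN : N.Normal := ‹N.Normal›
    have hconj : ∀ u : Dˣ, u ∈ N → b⁻¹ * u * b ∈ N := by
      intro u hu
      have h := hN.conj_mem u hu b⁻¹
      simpa using h
    have hconj' : ∀ u : Dˣ, u ∈ N → b * u * b⁻¹ ∈ N := by
      intro u hu
      exact hN.conj_mem u hu b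
    ext z
    constructor
    · rintro ⟨⟨ξ, hξ, hξv⟩, hz2⟩
      obtain ⟨μ, hμ, hμv⟩ := hz2
      rw [← hξv] at hμv
      have hsum : ((b⁻¹ * a * b : Dˣ) : D) + (ξ : D) = (μ : D) := hμv.symm
      have h2 := add_conj b b⁻¹ (b⁻¹ * a * b) ξ μ hsum
      have e1 : b * (b⁻¹ * a * b) * b⁻¹ = a := by group
      rw [e1] at h2
      refine ⟨((b * ξ * b⁻¹ : Dˣ) : D),
        ⟨⟨b * ξ * b⁻¹, hconj' ξ hξ, rfl⟩,
         ⟨b * μ * b⁻¹, hconj' μ hμ, h2.symm⟩⟩, ?_⟩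
      show (b : D)⁻¹ * ((b * ξ * b⁻¹ : Dˣ) : D) * (b : D) = z
      rw [← Units.val_inv_eq_inv_val, ← Units.val_mul, ← Units.val_mul, ← hξv]
      exact congrArg Units.val (by group)
    · rintro ⟨w, ⟨⟨τ, hτ, hτv⟩, hw2⟩, rfl⟩
      obtain ⟨μ, hμ, hμv⟩ := hw2
      rw [← hτv] at hμv
      have hsum : ((a : Dˣ) : D) + (τ : D) = (μ : D) := hμv.symm
      have h2 := add_conj b⁻¹ b a τ μ hsum
      have hwv : (fun t => (b : D)⁻¹ * t * (b : D)) w = ((b⁻¹ * τ * b : Dˣ) : D) := by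
        show (b : D)⁻¹ * w * (b : D) = ((b⁻¹ * τ * b : Dˣ) : D)
        rw [← hτv, ← Units.val_inv_eq_inv_val, ← Units.val_mul, ← Units.val_mul]
      constructor
      · rw [hwv]
        exact ⟨b⁻¹ * τ * b, hconj τ hτ, rfl⟩
      · rw [hwv]
        exact ⟨b⁻¹ * μ * b, hconj μ hμ, h2.symm⟩
  · -- (3)
    refine ⟨(q : D), ⟨q, hq, rfl⟩, ⟨p, hp, ?_⟩⟩
    rw [hpq]; abel
  · -- (4)
    rintro t ⟨⟨τ, hτ, hτv⟩, ht2⟩ ⟨ht3, ht4⟩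
    obtain ⟨μ, hμ, hμv⟩ := ht2
    obtain ⟨ρ, hρ, hρv⟩ := ht4
    have hsum : ((a : Dˣ) : D) + (τ : D) = (μ : D) := by rw [hτv]; exact hμv.symm
    have h2 := add_conj τ⁻¹ a⁻¹ a τ μ hsum
    have e1 : τ⁻¹ * a * a⁻¹ = τ⁻¹ := by group
    have e2 : τ⁻¹ * τ * a⁻¹ = a⁻¹ := by group
    rw [e1, e2] at h2
    have ht' : t⁻¹ = ((τ⁻¹ : Dˣ) : D) := by
      rw [← hτv, ← Units.val_inv_eq_inv_val]
    have hρ2 : ρ = τ⁻¹ * μ * a⁻¹ := by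
      apply Units.ext
      rw [hρv, ht', ← h2]
      exact add_comm _ _
    have hainv : a⁻¹ ∈ N := by
      have h3 : μ⁻¹ * τ * ρ = a⁻¹ := by rw [hρ2]; group
      rw [← h3]
      exact N.mul_mem (N.mul_mem (N.inv_mem hμ) hτ) hρ
    exact ha (by simpa using N.inv_mem hainv)
  · -- (5)
    refine ⟨q⁻¹ * a, ⟨q⁻¹, N.inv_mem hq, rfl⟩, ⟨1, N.one_mem, Units.val_one⟩, ?_⟩
    refine ⟨q⁻¹ * p, N.mul_mem (N.inv_mem hq) hp, ?_⟩
    have hap : ((a : Dˣ) : D) + ((q : Dˣ) : D) = ((p : Dˣ) : D) := by rw [hpq]; abel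
    calc ((q⁻¹ * p : Dˣ) : D) = ((q⁻¹ : Dˣ) : D) * ((p : Dˣ) : D) := Units.val_mul _ _
      _ = ((q⁻¹ : Dˣ) : D) * (((a : Dˣ) : D) + ((q : Dˣ) : D)) := by rw [hap]
      _ = ((q⁻¹ : Dˣ) : D) * ((a : Dˣ) : D) + ((q⁻¹ : Dˣ) : D) * ((q : Dˣ) : D) := by
          rw [mul_add]
      _ = ((q⁻¹ * a : Dˣ) : D) + (1 : D) := by rw [Units.inv_mul, Units.val_mul]
end

section
/- Let a ∈ G∖N and n ∈ N, and suppose a + n ∈ G∖N. Then (a + n)* commutes with a* in G*; that is, (a + n)* lies in the centralizer of a* in G*. -/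
open scoped Pointwise

/-- If `a ∈ G∖N`, `n ∈ N` and `a + n ∈ G∖N`, then `(a+n)*`
commutes with `a*` in `G* = G/N`. -/
theorem stmt_3 {D : Type*} [DivisionRing D] [Infinite D] (N : Subgroup Dˣ)
    [N.Normal] (hF : ∀ x : Dˣ, (x : D) ∈ Set.center D → x ∈ N)
    (hfin : Finite (Dˣ ⧸ N))
    (a : Dˣ) (ha : a ∉ N) (n : Dˣ) (hn : n ∈ N)
    (c : Dˣ) (hc : (c : D) = (a : D) + (n : D)) (hcN : c ∉ N) :
    Commute (QuotientGroup.mk c : Dˣ ⧸ N) (QuotientGroup.mk a) := by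
  have h1 : ((n : D))⁻¹ * (c : D) = 1 + ((n : D))⁻¹ * (a : D) := by
    rw [hc, mul_add, inv_mul_cancel₀ n.ne_zero, add_comm]
  have hcomm : Commute (n⁻¹ * c) (n⁻¹ * a) := by
    apply Units.ext
    simp only [Commute, SemiconjBy, Units.val_mul, Units.val_inv_eq_inv_val]
    rw [h1, add_mul, mul_add, one_mul, mul_one]
  have hmap := hcomm.map (QuotientGroup.mk' N)
  have hn1 : (QuotientGroup.mk' N) n = 1 := (QuotientGroup.eq_one_iff n).2 hn
  simpa [map_mul, map_inv, hn1] using hmap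
end

section
/- Let a, b, c ∈ G∖N with a + b = c. Then: (1) if d(a*, b*) > 2, then N(c) ⊆ N(a) ∩ N(b); (2) if d(a*, b*) > 2 and d(a*, c*) > 2, then N(b) = N(c) ⊆ N(a) ∩ N(−a); (3) if d(a*, b*) > 4, then either N(a) = N(c) ⊆ N(b) ∩ N(−b), or N(b) = N(c) ⊆ N(a) ∩ N(−a). -/
open scoped Pointwise

section Aux

lemma distGT_symm' {Q : Type*} {Γ : SimpleGraph Q} {u v : Q} {k : ℕ}
    (h : distGT Γ u v k) : distGT Γ v u k := fun p => by
  simpa [SimpleGraph.Walk.length_reverse] using h p.reverse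

variable {D : Type*} [DivisionRing D] (N : Subgroup Dˣ) [N.Normal]

lemma L1' (a n u : Dˣ) (hn : n ∈ N) (h : (u : D) = (a : D) + (n : D)) :
    Commute (QuotientGroup.mk a : Dˣ ⧸ N) (QuotientGroup.mk u) := by
  have hval : (u : D) * ((n : D))⁻¹ = (a : D) * ((n : D))⁻¹ + 1 := by
    rw [h, add_mul, mul_inv_cancel₀ n.ne_zero]
  have hw : (u * n⁻¹ : Dˣ) * (a * n⁻¹) = (a * n⁻¹) * (u * n⁻¹) := by
    apply Units.ext
    push_cast
    rw [hval, add_mul, mul_add, one_mul, mul_one]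
  have h1 : (QuotientGroup.mk (u * n⁻¹) : Dˣ ⧸ N) = QuotientGroup.mk u := by
    rw [QuotientGroup.mk_mul, (QuotientGroup.eq_one_iff _).2 (N.inv_mem hn), mul_one]
  have h2 : (QuotientGroup.mk (a * n⁻¹) : Dˣ ⧸ N) = QuotientGroup.mk a := by
    rw [QuotientGroup.mk_mul, (QuotientGroup.eq_one_iff _).2 (N.inv_mem hn), mul_one]
  have hc : Commute (QuotientGroup.mk (a * n⁻¹) : Dˣ ⧸ N) (QuotientGroup.mk (u * n⁻¹)) := by
    show _ * _ = _ * _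
    rw [← QuotientGroup.mk_mul, ← QuotientGroup.mk_mul, hw]
  rwa [h1, h2] at hc

lemma no_walk_aux' {Q : Type*} [Group Q] {x y : Q}
    (h : ∀ p : (commGraph Q).Walk x y, 2 < p.length)
    (hx : x ≠ 1) (hy : y ≠ 1) (u : Q) (hu : u ≠ 1)
    (h1 : Commute x u) (h2 : Commute u y) : False := by
  by_cases hxy : x = y
  · subst hxy; simpa using h SimpleGraph.Walk.nil
  by_cases hxu : x = u
  · subst hxu
    exact absurd (h (SimpleGraph.Walk.cons ⟨hxy, hx, hy, h2⟩ SimpleGraph.Walk.nil))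
      (by show ¬ 2 < 1; omega)
  by_cases huy : u = y
  · subst huy
    exact absurd (h (SimpleGraph.Walk.cons ⟨hxy, hx, hy, h1⟩ SimpleGraph.Walk.nil))
      (by show ¬ 2 < 1; omega)
  · exact absurd (h (SimpleGraph.Walk.cons ⟨hxu, hx, hu, h1⟩
      (SimpleGraph.Walk.cons ⟨huy, hu, hy, h2⟩ SimpleGraph.Walk.nil))) (by show ¬ 2 < 2; omega)

omit [N.Normal] in
lemma neg_mem_N' {n : Dˣ} (hneg : (-1 : Dˣ) ∈ N) (hn : n ∈ N) : -n ∈ N := by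
  rw [← neg_one_mul n]
  exact N.mul_mem hneg hn

lemma mk_neg' (hneg : (-1 : Dˣ) ∈ N) (u : Dˣ) :
    (QuotientGroup.mk (-u) : Dˣ ⧸ N) = QuotientGroup.mk u := by
  rw [← neg_one_mul u, QuotientGroup.mk_mul, (QuotientGroup.eq_one_iff _).2 hneg, one_mul]

/-- The contradiction engine. -/
lemma aux' (hneg : (-1 : Dˣ) ∈ N) (a b n m : Dˣ)
    (ha : a ∉ N) (hb : b ∉ N) (hn : n ∈ N) (hm : m ∈ N)
    (hsum : (a : D) + (b : D) + (n : D) = (m : D))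
    (hd : distGT (commGraph (Dˣ ⧸ N)) (QuotientGroup.mk a) (QuotientGroup.mk b) 2)
    (hcon : (a : D) + (n : D) ∉ unitsSet N) : False := by
  have h0 : (a : D) + (n : D) ≠ 0 := by
    intro h0
    apply ha
    have hval : (a : D) = ((-n : Dˣ) : D) := by
      rw [Units.val_neg]; exact eq_neg_of_add_eq_zero_left h0
    have : a = -n := Units.ext hval
    rw [this]; exact neg_mem_N' N hneg hn
  set u : Dˣ := Units.mk0 ((a : D) + (n : D)) h0 with hu_def
  have huval : (u : D) = (a : D) + (n : D) := rfl
  have huN : u ∉ N := fun h => hcon ⟨u, h, rfl⟩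
  have h1 : Commute (QuotientGroup.mk a : Dˣ ⧸ N) (QuotientGroup.mk u) :=
    L1' N a n u hn huval
  have hbval : (b : D) = ((-u : Dˣ) : D) + (m : D) := by
    rw [Units.val_neg, huval]
    have : ((a : D) + (n : D)) + (b : D) = (m : D) := by
      rw [← hsum]; abel
    rw [eq_comm, neg_add_eq_sub, sub_eq_iff_eq_add, ← this]; abel
  have h2' : Commute (QuotientGroup.mk (-u) : Dˣ ⧸ N) (QuotientGroup.mk b) :=
    L1' N (-u) m b hm hbval
  rw [mk_neg' N hneg] at h2'
  refine no_walk_aux' hd ?_ ?_ (QuotientGroup.mk u) ?_ h1 h2'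
  · exact fun h => ha ((QuotientGroup.eq_one_iff a).1 h)
  · exact fun h => hb ((QuotientGroup.eq_one_iff b).1 h)
  · exact fun h => huN ((QuotientGroup.eq_one_iff u).1 h)

lemma part1' (hneg : (-1 : Dˣ) ∈ N) (a b c : Dˣ) (ha : a ∉ N) (hb : b ∉ N)
    (habc : (a : D) + (b : D) = (c : D))
    (hd : distGT (commGraph (Dˣ ⧸ N)) (QuotientGroup.mk a) (QuotientGroup.mk b) 2) :
    nSet N (c : D) ⊆ nSet N (a : D) ∩ nSet N (b : D) := by
  rintro x ⟨⟨n, hn, rfl⟩, ⟨m, hm, hmv⟩⟩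
  have hsum_a : (a : D) + (b : D) + (n : D) = (m : D) := by rw [habc]; exact hmv.symm
  have hsum_b : (b : D) + (a : D) + (n : D) = (m : D) := by rw [add_comm (b : D)]; exact hsum_a
  refine ⟨⟨⟨n, hn, rfl⟩, ?_⟩, ⟨⟨n, hn, rfl⟩, ?_⟩⟩
  · by_contra hcon
    exact aux' N hneg a b n m ha hb hn hm hsum_a hd hcon
  · by_contra hcon
    exact aux' N hneg b a n m hb ha hn hm hsum_b (distGT_symm' hd) hcon

lemma part2' (hneg : (-1 : Dˣ) ∈ N) (a b c : Dˣ) (ha : a ∉ N) (hb : b ∉ N) (hc : c ∉ N)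
    (habc : (a : D) + (b : D) = (c : D))
    (hd_ab : distGT (commGraph (Dˣ ⧸ N)) (QuotientGroup.mk a) (QuotientGroup.mk b) 2)
    (hd_ac : distGT (commGraph (Dˣ ⧸ N)) (QuotientGroup.mk a) (QuotientGroup.mk c) 2) :
    nSet N (b : D) = nSet N (c : D) ∧
      nSet N (c : D) ⊆ nSet N (a : D) ∩ nSet N (-(a : D)) := by
  have hna : (-a : Dˣ) ∉ N := by
    intro h
    apply ha
    have : a = (-1 : Dˣ) * (-a) := by rw [neg_one_mul, neg_neg]
    rw [this]; exact N.mul_mem hneg h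
  have habc2 : (c : D) + ((-a : Dˣ) : D) = (b : D) := by
    rw [Units.val_neg, ← habc]; abel
  have hd2 : distGT (commGraph (Dˣ ⧸ N)) (QuotientGroup.mk c) (QuotientGroup.mk (-a)) 2 := by
    rw [mk_neg' N hneg]
    exact distGT_symm' hd_ac
  have h1 := part1' N hneg a b c ha hb habc hd_ab
  have h2 := part1' N hneg c (-a) b hc hna habc2 hd2
  rw [Units.val_neg] at h2
  constructor
  · apply Set.Subset.antisymm
    · exact fun x hx => (h2 hx).1
    · exact fun x hx => (h1 hx).2
  · exact fun x hx => ⟨(h1 hx).1, (h2 (h1 hx).2).2⟩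

end Aux

/-- Let `a, b, c ∈ G∖N` with `a + b = c`. Then (1)–(3) as in
Lemma 2.3 of the paper. -/
theorem stmt_4 {D : Type*} [DivisionRing D] [Infinite D] (N : Subgroup Dˣ)
    [N.Normal] (hF : ∀ x : Dˣ, (x : D) ∈ Set.center D → x ∈ N)
    (hfin : Finite (Dˣ ⧸ N))
    (a b c : Dˣ) (ha : a ∉ N) (hb : b ∉ N) (hc : c ∉ N)
    (habc : (a : D) + (b : D) = (c : D)) :
    -- (1)
    (distGT (commGraph (Dˣ ⧸ N)) (QuotientGroup.mk a) (QuotientGroup.mk b) 2 →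
      nSet N (c : D) ⊆ nSet N (a : D) ∩ nSet N (b : D)) ∧
    -- (2)
    (distGT (commGraph (Dˣ ⧸ N)) (QuotientGroup.mk a) (QuotientGroup.mk b) 2 →
      distGT (commGraph (Dˣ ⧸ N)) (QuotientGroup.mk a) (QuotientGroup.mk c) 2 →
      nSet N (b : D) = nSet N (c : D) ∧
        nSet N (c : D) ⊆ nSet N (a : D) ∩ nSet N (-(a : D))) ∧
    -- (3)
    (distGT (commGraph (Dˣ ⧸ N)) (QuotientGroup.mk a) (QuotientGroup.mk b) 4 →
      (nSet N (a : D) = nSet N (c : D) ∧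
        nSet N (c : D) ⊆ nSet N (b : D) ∩ nSet N (-(b : D))) ∨
      (nSet N (b : D) = nSet N (c : D) ∧
        nSet N (c : D) ⊆ nSet N (a : D) ∩ nSet N (-(a : D)))) := by
  have hneg : (-1 : Dˣ) ∈ N := by
    apply hF
    apply Semigroup.mem_center_iff.mpr
    intro g
    simp
  refine ⟨fun hd => part1' N hneg a b c ha hb habc hd,
    fun hd hd2 => part2' N hneg a b c ha hb hc habc hd hd2, fun hd4 => ?_⟩
  have hd2 : distGT (commGraph (Dˣ ⧸ N)) (QuotientGroup.mk a) (QuotientGroup.mk b) 2 :=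
    fun p => lt_of_le_of_lt (by norm_num) (hd4 p)
  by_cases hac : distGT (commGraph (Dˣ ⧸ N)) (QuotientGroup.mk a) (QuotientGroup.mk c) 2
  · exact Or.inr (part2' N hneg a b c ha hb hc habc hd2 hac)
  by_cases hbc : distGT (commGraph (Dˣ ⧸ N)) (QuotientGroup.mk b) (QuotientGroup.mk c) 2
  · refine Or.inl (part2' N hneg b a c hb ha hc ?_ (distGT_symm' hd2) hbc)
    rw [← habc]; abel
  · exfalso
    simp only [distGT, not_forall, not_lt] at hac hbc
    obtain ⟨p, hp⟩ := hac
    obtain ⟨q, hq⟩ := hbc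
    have := hd4 (p.append q.reverse)
    rw [SimpleGraph.Walk.length_append, SimpleGraph.Walk.length_reverse] at this
    omega
end

section
/- Let a, b ∈ G∖N with d(a*, b*) > 4, and suppose N(a) ⊆ N(b). Then a + b ∉ N ∪ {0} and a − b ∉ N ∪ {0}, and moreover: (1) N(a + b) = N(a) ⊆ N(b) ∩ N(−b); (2) N(a − b) = N(a) ⊆ N(b) ∩ N(−b). -/
open scoped Pointwise

section Helpers

variable {D : Type*} [DivisionRing D] (N : Subgroup Dˣ)

lemma val_mem_unitsSet {u : Dˣ} (h : u ∈ N) : (u : D) ∈ unitsSet N :=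
  Set.mem_image_of_mem _ h

lemma mem_of_val_mem {u : Dˣ} (h : (u : D) ∈ unitsSet N) : u ∈ N := by
  obtain ⟨n, hn, hv⟩ := h
  rwa [← Units.ext hv]

lemma neg_one_mem_aux (hF : ∀ x : Dˣ, (x : D) ∈ Set.center D → x ∈ N) : (-1 : Dˣ) ∈ N := by
  apply hF
  rw [Semigroup.mem_center_iff]
  intro g
  simp [mul_neg, neg_mul]

lemma neg_mem_aux (hF : ∀ x : Dˣ, (x : D) ∈ Set.center D → x ∈ N) {u : Dˣ} (h : u ∈ N) :
    -u ∈ N := by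
  have h1 : -u = (-1 : Dˣ) * u := Units.ext (by simp)
  rw [h1]
  exact mul_mem (neg_one_mem_aux N hF) h

lemma neg_not_mem_aux (hF : ∀ x : Dˣ, (x : D) ∈ Set.center D → x ∈ N) {u : Dˣ} (h : u ∉ N) :
    -u ∉ N := fun hm => h (by simpa using neg_mem_aux N hF hm)

variable [N.Normal]

lemma mk_neg_aux (hF : ∀ x : Dˣ, (x : D) ∈ Set.center D → x ∈ N) (x : Dˣ) :
    (QuotientGroup.mk (-x) : Dˣ ⧸ N) = QuotientGroup.mk x := by
  have h : -x = (-1 : Dˣ) * x := Units.ext (by simp)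
  rw [h, QuotientGroup.mk_mul, (QuotientGroup.eq_one_iff _).2 (neg_one_mem_aux N hF), one_mul]

lemma key_commute (x y n : Dˣ) (hn : n ∈ N) (h : (y : D) = (x : D) + (n : D)) :
    (QuotientGroup.mk x : Dˣ ⧸ N) * QuotientGroup.mk y
      = QuotientGroup.mk y * QuotientGroup.mk x := by
  have hmx : (QuotientGroup.mk (n⁻¹ * x) : Dˣ ⧸ N) = QuotientGroup.mk x := by
    rw [QuotientGroup.mk_mul, (QuotientGroup.eq_one_iff _).2 (inv_mem hn), one_mul]
  have hmy : (QuotientGroup.mk (n⁻¹ * y) : Dˣ ⧸ N) = QuotientGroup.mk y := by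
    rw [QuotientGroup.mk_mul, (QuotientGroup.eq_one_iff _).2 (inv_mem hn), one_mul]
  have hval : ((n⁻¹ * y : Dˣ) : D) = ((n⁻¹ * x : Dˣ) : D) + 1 := by
    rw [Units.val_mul, Units.val_mul, h, mul_add, Units.inv_mul]
  have hc : (n⁻¹ * x) * (n⁻¹ * y) = (n⁻¹ * y) * (n⁻¹ * x) := by
    apply Units.ext
    generalize hu : (n⁻¹ * x : Dˣ) = u at hval
    generalize hv : (n⁻¹ * y : Dˣ) = v at hval
    rw [Units.val_mul, Units.val_mul, hval, add_mul, mul_add, mul_one, one_mul]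
  rw [← hmx, ← hmy, ← QuotientGroup.mk_mul, ← QuotientGroup.mk_mul, hc]

end Helpers

lemma walk_le_one {Q : Type*} [Group Q] {u v : Q} (hu : u ≠ 1) (hv : v ≠ 1)
    (h : u * v = v * u) : ∃ p : (commGraph Q).Walk u v, p.length ≤ 1 := by
  by_cases huv : u = v
  · subst huv
    exact ⟨SimpleGraph.Walk.nil, by simp⟩
  · exact ⟨SimpleGraph.Walk.cons (show (commGraph Q).Adj u v from ⟨huv, hu, hv, h⟩) SimpleGraph.Walk.nil, by simp⟩

section Near

variable {D : Type*} [DivisionRing D] (N : Subgroup Dˣ) [N.Normal]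

lemma near (x y : Dˣ) (hx : x ∉ N) (hy : y ∉ N)
    (h : (y : D) - (x : D) ∈ unitsSet N ∪ {0}) :
    ∃ p : (commGraph (Dˣ ⧸ N)).Walk (QuotientGroup.mk x) (QuotientGroup.mk y),
      p.length ≤ 1 := by
  rcases h with h | h
  · obtain ⟨n, hn, hv⟩ := h
    have hxy : (y : D) = (x : D) + (n : D) := by rw [hv]; abel
    exact walk_le_one (fun h1 => hx ((QuotientGroup.eq_one_iff x).1 h1))
      (fun h1 => hy ((QuotientGroup.eq_one_iff y).1 h1)) (key_commute N x y n hn hxy)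
  · rw [Set.mem_singleton_iff, sub_eq_zero] at h
    have hxy : x = y := Units.ext h.symm
    subst hxy
    exact ⟨SimpleGraph.Walk.nil, by simp⟩

end Near

theorem aux_main {D : Type*} [DivisionRing D] (N : Subgroup Dˣ)
    [N.Normal] (hF : ∀ x : Dˣ, (x : D) ∈ Set.center D → x ∈ N)
    (a b : Dˣ) (ha : a ∉ N) (hb : b ∉ N)
    (hd : distGT (commGraph (Dˣ ⧸ N)) (QuotientGroup.mk a) (QuotientGroup.mk b) 4)
    (hsub : nSet N (a : D) ⊆ nSet N (b : D)) :
    ((a : D) + (b : D) ∉ unitsSet N ∪ {0}) ∧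
    nSet N (a : D) ⊆ nSet N (-(b : D)) ∧
    nSet N ((a : D) + (b : D)) = nSet N (a : D) := by

  have hnb : (-b : Dˣ) ∉ N := neg_not_mem_aux N hF hb
  have hwalk : ∀ p : (commGraph (Dˣ ⧸ N)).Walk (QuotientGroup.mk a) (QuotientGroup.mk b),
      p.length ≤ 4 → False := fun p hp => absurd (hd p) (by omega)
  -- Step 1 : a + b ∉ N ∪ {0}
  have h1 : (a : D) + (b : D) ∉ unitsSet N ∪ {0} := by
    intro h
    obtain ⟨p, hp⟩ := near N (-b) a hnb ha (by
      simpa [Units.val_neg, sub_neg_eq_add] using h)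
    apply hwalk ((p.copy (mk_neg_aux N hF b) rfl).reverse)
    simp only [SimpleGraph.Walk.length_reverse, SimpleGraph.Walk.length_copy]
    omega
  have hab0 : (a : D) + (b : D) ≠ 0 := fun h0 => h1 (Or.inr h0)
  have habU : (a : D) + (b : D) ∉ unitsSet N := fun hU => h1 (Or.inl hU)
  -- Step 2 : N(a) ⊆ N(-b)
  have hsub2 : nSet N (a : D) ⊆ nSet N (-(b : D)) := by
    rintro x ⟨hxN, haxN⟩
    obtain ⟨m, hm, hmv⟩ := hxN
    obtain ⟨n₁, hn₁, hn₁v⟩ := haxN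
    obtain ⟨n₂, hn₂, hn₂v⟩ := (hsub ⟨⟨m, hm, hmv⟩, ⟨n₁, hn₁, hn₁v⟩⟩).2
    refine ⟨⟨m, hm, hmv⟩, ?_⟩
    by_contra hc
    have hc0 : -(b : D) + x ≠ 0 := by
      intro h0
      rw [neg_add_eq_sub, sub_eq_zero] at h0
      exact hb (mem_of_val_mem N ⟨m, hm, hmv.trans h0⟩)
    -- c = -b + x is a unit not in N
    have hcuN : Units.mk0 (-(b : D) + x) hc0 ∉ N := fun hmem =>
      hc (by simpa using val_mem_unitsSet N hmem)
    -- a - x ∉ N ∪ {0}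
    have hw : (a : D) - x ∉ unitsSet N ∪ {0} := by
      rintro (hw | hw)
      · -- then -x ∈ N(a) ⊆ N(b), so b - x ∈ N, so c ∈ N: contradiction
        have hmx : -x ∈ nSet N (a : D) := by
          refine ⟨⟨-m, neg_mem_aux N hF hm, by rw [Units.val_neg, hmv]⟩, ?_⟩
          rw [← sub_eq_add_neg]
          exact hw
        obtain ⟨u, hu, huv⟩ := (hsub hmx).2
        apply hc
        exact ⟨-u, neg_mem_aux N hF hu, by rw [Units.val_neg, huv]; abel⟩
      · rw [Set.mem_singleton_iff, sub_eq_zero] at hw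
        exact ha (mem_of_val_mem N ⟨m, hm, hmv.trans hw.symm⟩)
    have hw0 : (a : D) - x ≠ 0 := fun h0 => hw (Or.inr h0)
    have hwuN : Units.mk0 ((a : D) - x) hw0 ∉ N := fun hmem =>
      (hw (Or.inl (by simpa using val_mem_unitsSet N hmem)))
    have habuN : Units.mk0 ((a : D) + (b : D)) hab0 ∉ N := fun hmem =>
      habU (by simpa using val_mem_unitsSet N hmem)
    -- the four walks
    obtain ⟨p1, hp1⟩ := near N a (Units.mk0 ((a : D) - x) hw0) ha hwuN
      (Or.inl ⟨-m, neg_mem_aux N hF hm, by simp only [Units.val_neg, Units.val_mk0, hmv]; abel⟩)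
    obtain ⟨p2, hp2⟩ := near N (Units.mk0 ((a : D) - x) hw0)
      (Units.mk0 ((a : D) + (b : D)) hab0) hwuN habuN
      (Or.inl ⟨n₂, hn₂, by simp only [Units.val_mk0]; rw [hn₂v]; abel⟩)
    obtain ⟨p3, hp3⟩ := near N (-(Units.mk0 ((a : D) + (b : D)) hab0))
      (Units.mk0 (-(b : D) + x) hc0) (neg_not_mem_aux N hF habuN) hcuN
      (Or.inl ⟨n₁, hn₁, by simp only [Units.val_neg, Units.val_mk0]; rw [hn₁v]; abel⟩)
    obtain ⟨p4, hp4⟩ := near N (Units.mk0 (-(b : D) + x) hc0) (-b) hcuN hnb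
      (Or.inl ⟨-m, neg_mem_aux N hF hm, by
        simp only [Units.val_neg, Units.val_mk0, hmv]; abel⟩)
    apply hwalk (((p1.append p2).append (p3.copy (mk_neg_aux N hF _) rfl)).append
      (p4.copy rfl (mk_neg_aux N hF b)))
    simp only [SimpleGraph.Walk.length_append, SimpleGraph.Walk.length_copy]
    omega
  refine ⟨h1, hsub2, ?_⟩
  -- the equality N(a+b) = N(a)
  apply Set.Subset.antisymm
  · rintro x ⟨hxN, hsx⟩
    obtain ⟨m, hm, hmv⟩ := hxN
    obtain ⟨n, hn, hnv⟩ := hsx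
    refine ⟨⟨m, hm, hmv⟩, ?_⟩
    by_contra hcw
    have hw0 : (a : D) + x ≠ 0 := by
      intro h0
      have h0' : (a : D) = ((-m : Dˣ) : D) := by
        rw [Units.val_neg, hmv]
        exact eq_neg_of_add_eq_zero_left h0
      exact ha (mem_of_val_mem N ⟨-m, neg_mem_aux N hF hm, h0'.symm⟩)
    have hwuN : Units.mk0 ((a : D) + x) hw0 ∉ N := fun hmem =>
      hcw (by simpa using val_mem_unitsSet N hmem)
    obtain ⟨p1, hp1⟩ := near N a (Units.mk0 ((a : D) + x) hw0) ha hwuN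
      (Or.inl ⟨m, hm, by simp only [Units.val_mk0, hmv]; abel⟩)
    obtain ⟨p2, hp2⟩ := near N (Units.mk0 ((a : D) + x) hw0) (-b) hwuN hnb
      (Or.inl ⟨-n, neg_mem_aux N hF hn, by
        simp only [Units.val_neg, Units.val_mk0]; rw [hnv]; abel⟩)
    apply hwalk (p1.append (p2.copy rfl (mk_neg_aux N hF b)))
    simp only [SimpleGraph.Walk.length_append, SimpleGraph.Walk.length_copy]
    omega
  · rintro x ⟨hxN, hax⟩
    obtain ⟨m, hm, hmv⟩ := hxN
    obtain ⟨n₁, hn₁, hn₁v⟩ := hax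
    obtain ⟨n₂, hn₂, hn₂v⟩ := (hsub ⟨⟨m, hm, hmv⟩, ⟨n₁, hn₁, hn₁v⟩⟩).2
    refine ⟨⟨m, hm, hmv⟩, ?_⟩
    by_contra hcv
    have hv0 : (a : D) + (b : D) + x ≠ 0 := by
      intro h0
      have h0' : (a : D) = ((-n₂ : Dˣ) : D) := by
        rw [Units.val_neg, hn₂v]
        apply eq_neg_of_add_eq_zero_left
        rw [← add_assoc]
        exact h0
      exact ha (mem_of_val_mem N ⟨-n₂, neg_mem_aux N hF hn₂, h0'.symm⟩)
    have hvuN : Units.mk0 ((a : D) + (b : D) + x) hv0 ∉ N := fun hmem =>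
      hcv (by simpa using val_mem_unitsSet N hmem)
    obtain ⟨p1, hp1⟩ := near N a (Units.mk0 ((a : D) + (b : D) + x) hv0) ha hvuN
      (Or.inl ⟨n₂, hn₂, by simp only [Units.val_mk0]; rw [hn₂v]; abel⟩)
    obtain ⟨p2, hp2⟩ := near N (Units.mk0 ((a : D) + (b : D) + x) hv0) b hvuN hb
      (Or.inl ⟨-n₁, neg_mem_aux N hF hn₁, by
        simp only [Units.val_neg, Units.val_mk0]; rw [hn₁v]; abel⟩)
    apply hwalk (p1.append p2)
    simp only [SimpleGraph.Walk.length_append]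
    omega



/-- Let `a, b ∈ G∖N` with `d(a*, b*) > 4` and `N(a) ⊆ N(b)`.
Then `a + b ∉ N ∪ {0}`, `a − b ∉ N ∪ {0}`, and
`N(a + b) = N(a) ⊆ N(b) ∩ N(−b)` and `N(a − b) = N(a) ⊆ N(b) ∩ N(−b)`. -/
theorem stmt_5 {D : Type*} [DivisionRing D] [Infinite D] (N : Subgroup Dˣ)
    [N.Normal] (hF : ∀ x : Dˣ, (x : D) ∈ Set.center D → x ∈ N)
    (hfin : Finite (Dˣ ⧸ N))
    (a b : Dˣ) (ha : a ∉ N) (hb : b ∉ N)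
    (hd : distGT (commGraph (Dˣ ⧸ N)) (QuotientGroup.mk a) (QuotientGroup.mk b) 4)
    (hsub : nSet N (a : D) ⊆ nSet N (b : D)) :
    (a : D) + (b : D) ∉ unitsSet N ∪ {0} ∧
    (a : D) - (b : D) ∉ unitsSet N ∪ {0} ∧
    -- (1)
    (nSet N ((a : D) + (b : D)) = nSet N (a : D) ∧
      nSet N (a : D) ⊆ nSet N (b : D) ∩ nSet N (-(b : D))) ∧
    -- (2)
    (nSet N ((a : D) - (b : D)) = nSet N (a : D) ∧
      nSet N (a : D) ⊆ nSet N (b : D) ∩ nSet N (-(b : D))) := by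
  have hnb : (-b : Dˣ) ∉ N := neg_not_mem_aux N hF hb
  have H := aux_main N hF a b ha hb hd hsub
  have hd' : distGT (commGraph (Dˣ ⧸ N)) (QuotientGroup.mk a) (QuotientGroup.mk (-b)) 4 := by
    rw [mk_neg_aux N hF]
    exact hd
  have hsub' : nSet N (a : D) ⊆ nSet N ((-b : Dˣ) : D) := by
    rw [Units.val_neg]
    exact H.2.1
  have H' := aux_main N hF a (-b) ha hnb hd' hsub'
  have e1 : ((-b : Dˣ) : D) = -(b : D) := Units.val_neg b
  refine ⟨H.1, ?_, ⟨H.2.2, fun x hx => ⟨hsub hx, H.2.1 hx⟩⟩, ?_,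
    fun x hx => ⟨hsub hx, H.2.1 hx⟩⟩
  · have h2 := H'.1
    rwa [e1, ← sub_eq_add_neg] at h2
  · have h2 := H'.2.2
    rwa [e1, ← sub_eq_add_neg] at h2
end

section
/- Let x, y ∈ G∖N and let n̄ ∈ N∖(N(x) ∪ N(y)). Suppose d(x*, y*) > 2. Then n̄ + m ∈ N for every m ∈ N(x + n̄) ∩ N(y + n̄). -/
open scoped Pointwise

/-- If `a + b ∈ N` (as value of a unit `p ∈ N`), then the images of `a` and `b`
in `Dˣ ⧸ N` commute. Indeed `a⁻¹b` commutes with `1 + a⁻¹b = a⁻¹p`. -/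
lemma aux_comm {D : Type*} [DivisionRing D] (N : Subgroup Dˣ) [N.Normal]
    {a b p : Dˣ} (hp : p ∈ N) (hab : (a : D) + b = p) :
    Commute (QuotientGroup.mk a : Dˣ ⧸ N) (QuotientGroup.mk b) := by
  have key : a⁻¹ * b * (a⁻¹ * p) = a⁻¹ * p * (a⁻¹ * b) := by
    apply Units.ext
    push_cast
    rw [← hab, mul_add, inv_mul_cancel₀ a.ne_zero]
    noncomm_ring
  have h2 : (QuotientGroup.mk (a⁻¹ * b * (a⁻¹ * p)) : Dˣ ⧸ N)
      = QuotientGroup.mk (a⁻¹ * p * (a⁻¹ * b)) := congrArg _ key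
  have hp1 : (QuotientGroup.mk p : Dˣ ⧸ N) = 1 := (QuotientGroup.eq_one_iff p).mpr hp
  simp only [QuotientGroup.mk_mul, QuotientGroup.mk_inv, hp1, mul_one, one_mul, mul_assoc] at h2
  have h3 : Commute ((QuotientGroup.mk a : Dˣ ⧸ N))⁻¹ (QuotientGroup.mk b) :=
    (mul_left_cancel h2).symm
  have h4 := h3.inv_left
  rwa [inv_inv] at h4

/-- Let `x, y ∈ G∖N` and `n̄ ∈ N∖(N(x) ∪ N(y))`. If
`d(x*, y*) > 2`, then `n̄ + m ∈ N` for every `m ∈ N(x + n̄) ∩ N(y + n̄)`. -/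
theorem stmt_9 {D : Type*} [DivisionRing D] [Infinite D] (N : Subgroup Dˣ)
    [N.Normal] (hF : ∀ x : Dˣ, (x : D) ∈ Set.center D → x ∈ N)
    (hfin : Finite (Dˣ ⧸ N))
    (x y : Dˣ) (hx : x ∉ N) (hy : y ∉ N)
    (nb : D) (hnb : nb ∈ unitsSet N \ (nSet N (x : D) ∪ nSet N (y : D)))
    (hd : distGT (commGraph (Dˣ ⧸ N)) (QuotientGroup.mk x) (QuotientGroup.mk y) 2) :
    ∀ m ∈ nSet N ((x : D) + nb) ∩ nSet N ((y : D) + nb), nb + m ∈ unitsSet N := by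
  intro m hm
  obtain ⟨hm1, hm2⟩ := hm
  have hxw : (x : D) + (nb + m) ∈ unitsSet N := by
    rw [← add_assoc]; exact hm1.2
  have hyw : (y : D) + (nb + m) ∈ unitsSet N := by
    rw [← add_assoc]; exact hm2.2
  obtain ⟨p, hpN, hpv⟩ := hxw
  obtain ⟨q, hqN, hqv⟩ := hyw
  by_contra hcon
  -- `nb + m ≠ 0`
  have hw0 : nb + m ≠ 0 := by
    intro h
    have hxp : x = p := Units.ext (by rw [hpv, h, add_zero])
    exact hx (hxp ▸ hpN)
  set w : Dˣ := Units.mk0 (nb + m) hw0 with hwdef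
  have hwv : (w : D) = nb + m := rfl
  have hwN : w ∉ N := fun h => hcon ⟨w, h, hwv⟩
  -- images in the quotient
  have hcomm1 : Commute (QuotientGroup.mk w : Dˣ ⧸ N) (QuotientGroup.mk x) :=
    aux_comm N hpN (by rw [hwv, hpv]; exact add_comm _ _)
  have hcomm2 : Commute (QuotientGroup.mk w : Dˣ ⧸ N) (QuotientGroup.mk y) :=
    aux_comm N hqN (by rw [hwv, hqv]; exact add_comm _ _)
  have hx1 : (QuotientGroup.mk x : Dˣ ⧸ N) ≠ 1 := by
    simpa [QuotientGroup.eq_one_iff] using hx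
  have hy1 : (QuotientGroup.mk y : Dˣ ⧸ N) ≠ 1 := by
    simpa [QuotientGroup.eq_one_iff] using hy
  have hw1 : (QuotientGroup.mk w : Dˣ ⧸ N) ≠ 1 := by
    simpa [QuotientGroup.eq_one_iff] using hwN
  by_cases hxy : (QuotientGroup.mk x : Dˣ ⧸ N) = QuotientGroup.mk y
  · have h := hd ((SimpleGraph.Walk.nil).copy rfl hxy)
    simp at h
  · by_cases hxw' : (QuotientGroup.mk x : Dˣ ⧸ N) = QuotientGroup.mk w
    · have hc : Commute (QuotientGroup.mk x : Dˣ ⧸ N) (QuotientGroup.mk y) := by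
        rw [hxw']; exact hcomm2
      have adj : (commGraph (Dˣ ⧸ N)).Adj (QuotientGroup.mk x) (QuotientGroup.mk y) :=
        ⟨hxy, hx1, hy1, hc.eq⟩
      have h := hd (SimpleGraph.Walk.cons adj SimpleGraph.Walk.nil)
      simp at h
    · by_cases hyw' : (QuotientGroup.mk y : Dˣ ⧸ N) = QuotientGroup.mk w
      · have hc : Commute (QuotientGroup.mk x : Dˣ ⧸ N) (QuotientGroup.mk y) := by
          rw [hyw']; exact hcomm1.symm
        have adj : (commGraph (Dˣ ⧸ N)).Adj (QuotientGroup.mk x) (QuotientGroup.mk y) :=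
          ⟨hxy, hx1, hy1, hc.eq⟩
        have h := hd (SimpleGraph.Walk.cons adj SimpleGraph.Walk.nil)
        simp at h
      · have adj1 : (commGraph (Dˣ ⧸ N)).Adj (QuotientGroup.mk x) (QuotientGroup.mk w) :=
          ⟨hxw', hx1, hw1, hcomm1.symm.eq⟩
        have adj2 : (commGraph (Dˣ ⧸ N)).Adj (QuotientGroup.mk w) (QuotientGroup.mk y) :=
          ⟨fun h => hyw' h.symm, hw1, hy1, hcomm2.eq⟩
        have h := hd (SimpleGraph.Walk.cons adj1 (SimpleGraph.Walk.cons adj2 SimpleGraph.Walk.nil))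
        simp at h
end

section
/- Let x*, y* ∈ G*∖{1}. Then each of the following conditions implies In(x*, y*): (1) d(x*, y*) > 4; (2) d(x*, y*) > 2 and d(x*, (x⁻¹y)*) > 3. -/
open scoped Pointwise

/-- The relation `In(x*, y*)`: for all `a ∈ Nx` and `b ∈ Ny`, either
`N(a) ⊆ N(b)` or `N(b) ⊆ N(a)`. -/
def inRel {D : Type*} [DivisionRing D] (N : Subgroup Dˣ) (x y : Dˣ) : Prop :=
  ∀ a b : Dˣ, (∃ n ∈ N, a = n * x) → (∃ n ∈ N, b = n * y) →
    nSet N (a : D) ⊆ nSet N (b : D) ∨ nSet N (b : D) ⊆ nSet N (a : D)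

section Aux

variable {D : Type*} [DivisionRing D]

/-- A unit commutes with "itself plus one". -/
private lemma unit_comm_addOne {U V : Dˣ} (h : (V : D) = (U : D) + 1) : Commute U V :=
  Units.ext (by
    simp only [Units.val_mul, h]
    rw [mul_add, add_mul, mul_one, one_mul])

/-- A unit commutes with "one minus itself". -/
private lemma unit_comm_oneSub {U V : Dˣ} (h : (V : D) = 1 - (U : D)) : Commute U V :=
  Units.ext (by
    simp only [Units.val_mul, h]
    rw [mul_sub, sub_mul, mul_one, one_mul])

/-- In the commuting graph, two commuting nonidentity vertices are joined by a
walk of length at most one. -/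
private lemma exists_walk_le_one {Q : Type*} [Group Q] {u v : Q}
    (hu : u ≠ 1) (hv : v ≠ 1) (hc : Commute u v) :
    ∃ w : (commGraph Q).Walk u v, w.length ≤ 1 := by
  by_cases h : u = v
  · exact ⟨(SimpleGraph.Walk.nil : (commGraph Q).Walk u u).copy rfl h, by simp⟩
  · exact ⟨SimpleGraph.Walk.cons (show (commGraph Q).Adj u v from ⟨h, hu, hv, hc⟩)
      SimpleGraph.Walk.nil, by simp⟩

/-- Core construction: from a failure of the nesting of `N(a)` and `N(b)` we
obtain either that `x*` and `y*` commute, or a configuration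
`x* — e* — g* — c* — y*` of commuting pairs, together with the key extra
commutation `[x* g*⁻¹, y* g*⁻¹] = 1`. -/
private lemma core (N : Subgroup Dˣ) [N.Normal]
    (hF : ∀ x : Dˣ, (x : D) ∈ Set.center D → x ∈ N)
    (x y : Dˣ) (hx : x ∉ N) (hy : y ∉ N)
    (a b : Dˣ) (ha : ∃ n ∈ N, a = n * x) (hb : ∃ n ∈ N, b = n * y)
    (h1 : ¬ nSet N (a : D) ⊆ nSet N (b : D))
    (h2 : ¬ nSet N (b : D) ⊆ nSet N (a : D)) :
    Commute (QuotientGroup.mk x : Dˣ ⧸ N) (QuotientGroup.mk y) ∨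
    ∃ E C G : Dˣ ⧸ N, E ≠ 1 ∧ C ≠ 1 ∧ G ≠ 1 ∧
      Commute (QuotientGroup.mk x : Dˣ ⧸ N) E ∧ Commute E G ∧ Commute G C ∧
      Commute C (QuotientGroup.mk y : Dˣ ⧸ N) ∧
      Commute ((QuotientGroup.mk x : Dˣ ⧸ N) * G⁻¹)
        ((QuotientGroup.mk y : Dˣ ⧸ N) * G⁻¹) := by
  obtain ⟨αd, hαa, hαb⟩ := Set.not_subset.mp h1
  obtain ⟨βd, hβb, hβa⟩ := Set.not_subset.mp h2
  obtain ⟨αu, hαuN, hαuv⟩ := hαa.1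
  obtain ⟨nu, hnuN, hnuv⟩ := hαa.2
  obtain ⟨βu, hβuN, hβuv⟩ := hβb.1
  obtain ⟨mu, hmuN, hmuv⟩ := hβb.2
  have hbα : ((b : D) + αd) ∉ unitsSet N := fun hc => hαb ⟨hαa.1, hc⟩
  have haβ : ((a : D) + βd) ∉ unitsSet N := fun hc => hβa ⟨hβb.1, hc⟩
  -- `-1 ∈ N`
  have hneg1 : (-1 : Dˣ) ∈ N := by
    apply hF
    have h' : ((-1 : Dˣ) : D) = -1 := by simp
    rw [h']
    exact Set.neg_mem_center Set.one_mem_center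
  -- `a ∉ N` and `b ∉ N`
  have haN : a ∉ N := by
    intro hmem
    obtain ⟨ν, hν, h⟩ := ha
    have h' : ν⁻¹ * a ∈ N := N.mul_mem (N.inv_mem hν) hmem
    rw [h, inv_mul_cancel_left] at h'
    exact hx h'
  have hbN : b ∉ N := by
    intro hmem
    obtain ⟨ν, hν, h⟩ := hb
    have h' : ν⁻¹ * b ∈ N := N.mul_mem (N.inv_mem hν) hmem
    rw [h, inv_mul_cancel_left] at h'
    exact hy h'
  -- quotient classes of `a` and `b`
  have mkN : ∀ u : Dˣ, u ∈ N → (QuotientGroup.mk u : Dˣ ⧸ N) = 1 :=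
    fun u hu => (QuotientGroup.eq_one_iff u).mpr hu
  have hπa : (QuotientGroup.mk a : Dˣ ⧸ N) = QuotientGroup.mk x := by
    obtain ⟨ν, hν, h⟩ := ha
    rw [h, show (QuotientGroup.mk (ν * x) : Dˣ ⧸ N) =
      QuotientGroup.mk ν * QuotientGroup.mk x from rfl, mkN ν hν, one_mul]
  have hπb : (QuotientGroup.mk b : Dˣ ⧸ N) = QuotientGroup.mk y := by
    obtain ⟨ν, hν, h⟩ := hb
    rw [h, show (QuotientGroup.mk (ν * y) : Dˣ ⧸ N) =
      QuotientGroup.mk ν * QuotientGroup.mk y from rfl, mkN ν hν, one_mul]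
  have hqinv : ∀ (v u : Dˣ), u ∈ N →
      (QuotientGroup.mk (v * u⁻¹) : Dˣ ⧸ N) = QuotientGroup.mk v := by
    intro v u hu
    rw [show (QuotientGroup.mk (v * u⁻¹) : Dˣ ⧸ N) =
      QuotientGroup.mk v * (QuotientGroup.mk u)⁻¹ from rfl, mkN u hu, inv_one, mul_one]
  -- `b + α` and `a + β` are nonzero
  have hbα0 : ((b : D) + αd) ≠ 0 := by
    intro h0
    apply hbN
    have hval : ((-1 : Dˣ) * αu : Dˣ) = b := by
      apply Units.ext
      have hb' : (b : D) = -αd := eq_neg_of_add_eq_zero_left h0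
      rw [Units.val_mul, Units.val_neg, Units.val_one, hαuv, hb', neg_one_mul]
    rw [← hval]
    exact N.mul_mem hneg1 hαuN
  have haβ0 : ((a : D) + βd) ≠ 0 := by
    intro h0
    apply haN
    have hval : ((-1 : Dˣ) * βu : Dˣ) = a := by
      apply Units.ext
      have ha' : (a : D) = -βd := eq_neg_of_add_eq_zero_left h0
      rw [Units.val_mul, Units.val_neg, Units.val_one, hβuv, ha', neg_one_mul]
    rw [← hval]
    exact N.mul_mem hneg1 hβuN
  set cu : Dˣ := Units.mk0 _ hbα0 with hcu
  set eu : Dˣ := Units.mk0 _ haβ0 with heu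
  have hcuv : (cu : D) = (b : D) + αd := rfl
  have heuv : (eu : D) = (a : D) + βd := rfl
  have hcuN : cu ∉ N := fun h => hbα ⟨cu, h, hcuv⟩
  have heuN : eu ∉ N := fun h => haβ ⟨eu, h, heuv⟩
  by_cases hg0 : ((b : D) - (a : D)) = 0
  · -- degenerate: `a = b`, so `x* = y*`
    left
    have hab : a = b := Units.ext (by
      have := sub_eq_zero.mp hg0; exact this.symm)
    have : (QuotientGroup.mk x : Dˣ ⧸ N) = QuotientGroup.mk y := by
      rw [← hπa, ← hπb, hab]
    rw [this]
  by_cases hgN : ((b : D) - (a : D)) ∈ unitsSet N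
  · -- degenerate: `b - a ∈ N`, then `x*` and `y*` commute
    left
    obtain ⟨gu, hguN, hguv⟩ := hgN
    have hU5 : Commute (a * gu⁻¹) (b * gu⁻¹) := by
      apply unit_comm_addOne
      rw [Units.val_mul, Units.val_mul]
      have hb' : (b : D) = (a : D) + (gu : D) := by rw [hguv]; abel
      rw [hb', add_mul]
      congr 1
      exact (Units.mul_inv _)
    have h := hU5.map (QuotientGroup.mk' N)
    simpa only [QuotientGroup.mk'_apply, hqinv a gu hguN, hqinv b gu hguN, hπa, hπb] using h
  · -- main case: `g := b - a ∉ N ∪ {0}`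
    right
    set gu : Dˣ := Units.mk0 _ hg0 with hgu
    have hguv : (gu : D) = (b : D) - (a : D) := rfl
    have hguN : gu ∉ N := fun h => hgN ⟨gu, h, hguv⟩
    refine ⟨QuotientGroup.mk eu, QuotientGroup.mk cu, QuotientGroup.mk gu,
      ?_, ?_, ?_, ?_, ?_, ?_, ?_, ?_⟩
    · exact fun h => heuN ((QuotientGroup.eq_one_iff eu).mp h)
    · exact fun h => hcuN ((QuotientGroup.eq_one_iff cu).mp h)
    · exact fun h => hguN ((QuotientGroup.eq_one_iff gu).mp h)
    · -- Commute x* e*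
      have hU1 : Commute (a * βu⁻¹) (eu * βu⁻¹) := by
        apply unit_comm_addOne
        rw [Units.val_mul, Units.val_mul, heuv, ← hβuv, add_mul]
        congr 1
        exact (Units.mul_inv _)
      have h := hU1.map (QuotientGroup.mk' N)
      simpa only [QuotientGroup.mk'_apply, hqinv a βu hβuN, hqinv eu βu hβuN, hπa] using h
    · -- Commute e* g*
      have hU4 : Commute (gu * mu⁻¹) (eu * mu⁻¹) := by
        apply unit_comm_oneSub
        rw [Units.val_mul, Units.val_mul, heuv, hguv]
        have : (a : D) + βd = ((mu : D) - ((b : D) - (a : D))) := by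
          rw [hmuv]; abel
        rw [this, sub_mul, Units.mul_inv]
      have h := hU4.map (QuotientGroup.mk' N)
      rw [show ((QuotientGroup.mk' N) (gu * mu⁻¹)) = QuotientGroup.mk gu from
        hqinv gu mu hmuN, show ((QuotientGroup.mk' N) (eu * mu⁻¹)) = QuotientGroup.mk eu from
        hqinv eu mu hmuN] at h
      exact h.symm
    · -- Commute g* c*
      have hU3 : Commute (gu * nu⁻¹) (cu * nu⁻¹) := by
        apply unit_comm_addOne
        rw [Units.val_mul, Units.val_mul, hcuv, hguv]
        have : (b : D) + αd = ((b : D) - (a : D)) + (nu : D) := by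
          rw [hnuv]; abel
        rw [this, add_mul]
        congr 1
        exact (Units.mul_inv _)
      have h := hU3.map (QuotientGroup.mk' N)
      simpa only [QuotientGroup.mk'_apply, hqinv gu nu hnuN, hqinv cu nu hnuN] using h
    · -- Commute c* y*
      have hU2 : Commute (b * αu⁻¹) (cu * αu⁻¹) := by
        apply unit_comm_addOne
        rw [Units.val_mul, Units.val_mul, hcuv, ← hαuv, add_mul]
        congr 1
        exact (Units.mul_inv _)
      have h := hU2.map (QuotientGroup.mk' N)
      rw [show ((QuotientGroup.mk' N) (b * αu⁻¹)) = QuotientGroup.mk b from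
        hqinv b αu hαuN, show ((QuotientGroup.mk' N) (cu * αu⁻¹)) = QuotientGroup.mk cu from
        hqinv cu αu hαuN, hπb] at h
      exact h.symm
    · -- Commute (x* g*⁻¹) (y* g*⁻¹)
      have hU5 : Commute (a * gu⁻¹) (b * gu⁻¹) := by
        apply unit_comm_addOne
        rw [Units.val_mul, Units.val_mul]
        have hb' : (b : D) = (a : D) + (gu : D) := by rw [hguv]; abel
        rw [hb', add_mul]
        congr 1
        exact (Units.mul_inv _)
      have h := hU5.map (QuotientGroup.mk' N)
      rw [show ((QuotientGroup.mk' N) (a * gu⁻¹)) =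
        QuotientGroup.mk a * (QuotientGroup.mk gu)⁻¹ from rfl,
        show ((QuotientGroup.mk' N) (b * gu⁻¹)) =
        QuotientGroup.mk b * (QuotientGroup.mk gu)⁻¹ from rfl, hπa, hπb] at h
      exact h

end Aux

/-- Each of (1) `d(x*, y*) > 4` and
(2) `d(x*, y*) > 2` together with `d(x*, (x⁻¹y)*) > 3` implies `In(x*, y*)`. -/
theorem stmt_10 {D : Type*} [DivisionRing D] [Infinite D] (N : Subgroup Dˣ)
    [N.Normal] (hF : ∀ x : Dˣ, (x : D) ∈ Set.center D → x ∈ N)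
    (hfin : Finite (Dˣ ⧸ N))
    (x y : Dˣ) (hx : x ∉ N) (hy : y ∉ N) :
    -- (1)
    (distGT (commGraph (Dˣ ⧸ N)) (QuotientGroup.mk x) (QuotientGroup.mk y) 4 →
      inRel N x y) ∧
    -- (2)
    (distGT (commGraph (Dˣ ⧸ N)) (QuotientGroup.mk x) (QuotientGroup.mk y) 2 →
      distGT (commGraph (Dˣ ⧸ N)) (QuotientGroup.mk x) (QuotientGroup.mk (x⁻¹ * y)) 3 →
      inRel N x y) := by
  have hX1 : (QuotientGroup.mk x : Dˣ ⧸ N) ≠ 1 :=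
    fun h => hx ((QuotientGroup.eq_one_iff x).mp h)
  have hY1 : (QuotientGroup.mk y : Dˣ ⧸ N) ≠ 1 :=
    fun h => hy ((QuotientGroup.eq_one_iff y).mp h)
  constructor
  · -- (1)
    intro hd a b ha hb
    by_contra hcon
    push_neg at hcon
    obtain ⟨h1, h2⟩ := hcon
    rcases core N hF x y hx hy a b ha hb h1 h2 with
      hXY | ⟨E, C, G, hE1, hC1, hG1, c1, c2, c3, c4, c5⟩
    · obtain ⟨w, hw⟩ := exists_walk_le_one hX1 hY1 hXY
      have := hd w
      omega
    · obtain ⟨w1, hw1⟩ := exists_walk_le_one hX1 hE1 c1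
      obtain ⟨w2, hw2⟩ := exists_walk_le_one hE1 hG1 c2
      obtain ⟨w3, hw3⟩ := exists_walk_le_one hG1 hC1 c3
      obtain ⟨w4, hw4⟩ := exists_walk_le_one hC1 hY1 c4
      have := hd (((w1.append w2).append w3).append w4)
      simp only [SimpleGraph.Walk.length_append] at this
      omega
  · -- (2)
    intro hdA hdB a b ha hb
    by_contra hcon
    push_neg at hcon
    obtain ⟨h1, h2⟩ := hcon
    rcases core N hF x y hx hy a b ha hb h1 h2 with
      hXY | ⟨E, C, G, hE1, hC1, hG1, c1, c2, c3, c4, c5⟩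
    · obtain ⟨w, hw⟩ := exists_walk_le_one hX1 hY1 hXY
      have := hdA w
      omega
    · -- `x* ≠ y*`
      have hXY : (QuotientGroup.mk x : Dˣ ⧸ N) ≠ QuotientGroup.mk y := by
        intro h
        obtain ⟨w, hw⟩ := exists_walk_le_one hX1 hY1 (by rw [h])
        have := hdA w
        omega
      -- `G ≠ x*`
      have hGX : G ≠ QuotientGroup.mk x := by
        intro h
        have cXC : Commute (QuotientGroup.mk x : Dˣ ⧸ N) C := h ▸ c3
        obtain ⟨w1, hw1⟩ := exists_walk_le_one hX1 hC1 cXC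
        obtain ⟨w2, hw2⟩ := exists_walk_le_one hC1 hY1 c4
        have := hdA (w1.append w2)
        simp only [SimpleGraph.Walk.length_append] at this
        omega
      set T : Dˣ ⧸ N := G⁻¹ * QuotientGroup.mk x with hT
      have hT1 : T ≠ 1 := by
        rw [hT, Ne, inv_mul_eq_one]
        exact hGX
      have cET : Commute E T := (c2.inv_right).mul_right c1.symm
      have cTH : Commute T ((QuotientGroup.mk x : Dˣ ⧸ N)⁻¹ * QuotientGroup.mk y) := by
        have h6 := c5.map (MulAut.conj (G⁻¹ : Dˣ ⧸ N))
        simp only [MulAut.conj_apply, inv_inv] at h6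
        have h6' : Commute (G⁻¹ * QuotientGroup.mk x : Dˣ ⧸ N) (G⁻¹ * QuotientGroup.mk y) := by
          have e1 : (G⁻¹ * (QuotientGroup.mk x * G⁻¹) * G : Dˣ ⧸ N) = G⁻¹ * QuotientGroup.mk x := by
            group
          have e2 : (G⁻¹ * (QuotientGroup.mk y * G⁻¹) * G : Dˣ ⧸ N) = G⁻¹ * QuotientGroup.mk y := by
            group
          rwa [e1, e2] at h6
        have h7 : Commute (G⁻¹ * QuotientGroup.mk x : Dˣ ⧸ N)
            ((G⁻¹ * QuotientGroup.mk x)⁻¹ * (G⁻¹ * QuotientGroup.mk y)) :=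
          ((Commute.refl _).inv_right).mul_right h6'
        have e3 : ((G⁻¹ * QuotientGroup.mk x : Dˣ ⧸ N)⁻¹ * (G⁻¹ * QuotientGroup.mk y)) =
            (QuotientGroup.mk x : Dˣ ⧸ N)⁻¹ * QuotientGroup.mk y := by group
        rwa [e3] at h7
      have hH1 : ((QuotientGroup.mk x : Dˣ ⧸ N)⁻¹ * QuotientGroup.mk y) ≠ 1 := by
        rw [Ne, inv_mul_eq_one]
        exact hXY
      obtain ⟨w1, hw1⟩ := exists_walk_le_one hX1 hE1 c1
      obtain ⟨w2, hw2⟩ := exists_walk_le_one hE1 hT1 cET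
      obtain ⟨w3, hw3⟩ := exists_walk_le_one hT1 hH1 cTH
      have hHmk : (QuotientGroup.mk (x⁻¹ * y) : Dˣ ⧸ N) =
          (QuotientGroup.mk x : Dˣ ⧸ N)⁻¹ * QuotientGroup.mk y := rfl
      have := hdB ((((w1.append w2).append w3)).copy rfl hHmk.symm)
      simp only [SimpleGraph.Walk.length_copy, SimpleGraph.Walk.length_append] at this
      omega
end

section
/- Assume G satisfies the U-Hypothesis with respect to ℕ; set N̄ := N∖ℕ, U := {n ∈ ℕ : n⁻¹ ∈ ℕ} and M := ℕ∖U. Then: (1) for every n̄ ∈ N̄, n̄ + U = U (as sets) and n̄⁻¹ ∈ ℕ; (2) for every s ∈ N∖U, s ∈ M if and only if s⁻¹ ∈ N̄; (3) for every u ∈ U, uN̄ = N̄u = N̄ and uM = Mu = M; (4) N̄N̄ ⊆ N̄ and MM ⊆ M (setwise products). -/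
open scoped Pointwise

/-- `G` satisfies the *U-Hypothesis* with respect to `S`: `S` is a conjugation-invariant
subset of `G` with `∅ ≠ S ⊊ N` such that (U1) `1, −1 ∈ S`; (U2) `S·S = S`;
(U3) for all `n̄ ∈ N∖S`, `n̄ + 1 ∈ S` and `n̄ − 1 ∈ N`. -/
def UHyp {D : Type*} [DivisionRing D] (N : Subgroup Dˣ) (S : Set D) : Prop :=
  (∀ g : Dˣ, (fun t => (g : D)⁻¹ * t * (g : D)) '' S = S) ∧
  S.Nonempty ∧ S ⊂ unitsSet N ∧
  (1 : D) ∈ S ∧ (-1 : D) ∈ S ∧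
  S * S = S ∧
  (∀ t ∈ unitsSet N \ S, t + 1 ∈ S ∧ t - 1 ∈ unitsSet N)

section Helpers

variable {D : Type*} [DivisionRing D] {N : Subgroup Dˣ}

lemma unitsSet_mul' {x y : D} (hx : x ∈ unitsSet N) (hy : y ∈ unitsSet N) :
    x * y ∈ unitsSet N := by
  obtain ⟨a, ha, rfl⟩ := hx
  obtain ⟨b, hb, rfl⟩ := hy
  exact ⟨a * b, mul_mem ha hb, rfl⟩

lemma unitsSet_inv' {x : D} (hx : x ∈ unitsSet N) : x⁻¹ ∈ unitsSet N := by
  obtain ⟨a, ha, rfl⟩ := hx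
  exact ⟨a⁻¹, inv_mem ha, by simp⟩

lemma unitsSet_ne_zero' {x : D} (hx : x ∈ unitsSet N) : x ≠ 0 := by
  obtain ⟨a, _, rfl⟩ := hx
  exact a.ne_zero

lemma unitsSet_neg' (hm1 : (-1 : D) ∈ unitsSet N) {x : D} (hx : x ∈ unitsSet N) :
    -x ∈ unitsSet N := by
  obtain ⟨a, ha, rfl⟩ := hx
  obtain ⟨w, hw, hw2⟩ := hm1
  have hwe : w = -1 := Units.ext (by simpa using hw2)
  exact ⟨-a, by rw [show -a = w * a by rw [hwe]; simp]; exact mul_mem hw ha, by simp⟩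

end Helpers

/-- With `N̄ = N∖S`, `U = {n ∈ S : n⁻¹ ∈ S}` and `M = S∖U`:
(1) for all `n̄ ∈ N̄`, `n̄ + U = U` and `n̄⁻¹ ∈ S`; (2) for `s ∈ N∖U`,
`s ∈ M ↔ s⁻¹ ∈ N̄`; (3) for all `u ∈ U`, `uN̄ = N̄u = N̄` and `uM = Mu = M`;
(4) `N̄·N̄ ⊆ N̄` and `M·M ⊆ M`. -/
theorem stmt_16 {D : Type*} [DivisionRing D] [Infinite D] (N : Subgroup Dˣ)
    [N.Normal] (hF : ∀ x : Dˣ, (x : D) ∈ Set.center D → x ∈ N)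
    (hfin : Finite (Dˣ ⧸ N))
    (S : Set D) (hS : UHyp N S)
    (Nbar Us M : Set D)
    (hNbar : Nbar = unitsSet N \ S)
    (hUs : Us = {t : D | t ∈ S ∧ t⁻¹ ∈ S})
    (hM : M = S \ Us) :
    -- (1)
    (∀ t ∈ Nbar, (fun u => t + u) '' Us = Us ∧ t⁻¹ ∈ S) ∧
    -- (2)
    (∀ s ∈ unitsSet N \ Us, s ∈ M ↔ s⁻¹ ∈ Nbar) ∧
    -- (3)
    (∀ u ∈ Us, (fun s => u * s) '' Nbar = Nbar ∧ (fun s => s * u) '' Nbar = Nbar ∧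
      (fun s => u * s) '' M = M ∧ (fun s => s * u) '' M = M) ∧
    -- (4)
    (Nbar * Nbar ⊆ Nbar ∧ M * M ⊆ M) := by
  
  subst hNbar hUs hM
  obtain ⟨hconj, hne, hsub, h1, hneg1, hSS, hU3⟩ := hS
  have hsubset : S ⊆ unitsSet N := hsub.subset
  have hmulS : ∀ {x y : D}, x ∈ S → y ∈ S → x * y ∈ S := fun hx hy =>
    hSS ▸ Set.mul_mem_mul hx hy
  have hnegS : ∀ {x : D}, x ∈ S → -x ∈ S := by
    intro x hx
    have := hmulS hneg1 hx
    rwa [neg_one_mul] at this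
  have hne0S : ∀ {x : D}, x ∈ S → x ≠ 0 := fun hx => unitsSet_ne_zero' (hsubset hx)
  -- Lemma B : t ∈ N̄ → t - 1 ∈ S
  have hB : ∀ t ∈ unitsSet N \ S, t - 1 ∈ S := by
    intro t ht
    have h2 := (hU3 t ht).2
    by_contra hc
    have h3 := (hU3 (t - 1) ⟨h2, hc⟩).1
    rw [sub_add_cancel] at h3
    exact ht.2 h3
  -- inverse lemma : t ∈ N̄ → t⁻¹ ∈ S
  have hInv : ∀ a ∈ unitsSet N \ S, a⁻¹ ∈ S := by
    intro a ha
    by_contra hc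
    have ha0 : a ≠ 0 := unitsSet_ne_zero' ha.1
    have ha1 : a ≠ 1 := fun h => ha.2 (h ▸ h1)
    have hainv : a⁻¹ ∈ unitsSet N \ S := ⟨unitsSet_inv' ha.1, hc⟩
    have hs : a - 1 ∈ S := hB a ha
    have hs0 : a - 1 ≠ 0 := sub_ne_zero.mpr ha1
    have htt : (1 : D) - a⁻¹ ∈ S := by
      have := hnegS (hB _ hainv)
      rwa [neg_sub] at this
    have htt0 : (1 : D) - a⁻¹ ≠ 0 := by
      intro h
      exact ha1 (inv_eq_one.mp (sub_eq_zero.mp h).symm)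
    have key : a * (1 - a⁻¹) = a - 1 := by
      rw [mul_sub, mul_one, mul_inv_cancel₀ ha0]
    by_cases h2 : (1 - a⁻¹)⁻¹ ∈ S
    · have : a ∈ S := by
        have h3 := hmulS hs h2
        rwa [← key, mul_assoc, mul_inv_cancel₀ htt0, mul_one] at h3
      exact ha.2 this
    · have hb : (1 - a⁻¹)⁻¹ ∈ unitsSet N \ S := ⟨unitsSet_inv' (hsubset htt), h2⟩
      have hb1 : (1 - a⁻¹)⁻¹ - 1 ∈ S := hB _ hb
      have e : (1 - a⁻¹)⁻¹ - 1 = (a - 1)⁻¹ := by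
        rw [← key, mul_inv_rev,
          show ((1 : D) - a⁻¹)⁻¹ * a⁻¹ = (1 - a⁻¹)⁻¹ * (1 - (1 - a⁻¹)) by
            rw [sub_sub_cancel],
          mul_sub, mul_one, inv_mul_cancel₀ htt0]
      have hsinv : (a - 1)⁻¹ ∈ S := e ▸ hb1
      have : a⁻¹ ∈ S := by
        have h3 := hmulS hsinv htt
        rwa [show (1 : D) - a⁻¹ = (a - 1) * a⁻¹ by
            rw [sub_mul, mul_inv_cancel₀ ha0, one_mul],
          ← mul_assoc, inv_mul_cancel₀ hs0, one_mul] at h3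
      exact hc this
  -- Lemma C : N̄ · N̄ ⊆ N̄
  have hC : ∀ a ∈ unitsSet N \ S, ∀ b ∈ unitsSet N \ S, a * b ∈ unitsSet N \ S := by
    intro a ha b hb
    refine ⟨unitsSet_mul' ha.1 hb.1, fun h => ?_⟩
    have hb0 : b ≠ 0 := unitsSet_ne_zero' hb.1
    have : a ∈ S := by
      have h3 := hmulS h (hInv b hb)
      rwa [mul_assoc, mul_inv_cancel₀ hb0, mul_one] at h3
    exact ha.2 this
  -- Lemma A : a ∈ N̄ → a + 1 ∈ S and (a+1)⁻¹ ∈ S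
  have hA : ∀ a ∈ unitsSet N \ S, a + 1 ∈ S ∧ (a + 1)⁻¹ ∈ S := by
    intro a ha
    have h1' := (hU3 a ha).1
    refine ⟨h1', ?_⟩
    by_contra hc
    have ha10 : a + 1 ≠ 0 := by
      intro h
      exact ha.2 (by rw [eq_neg_of_add_eq_zero_left h]; exact hneg1)
    have hb : (a + 1)⁻¹ ∈ unitsSet N \ S := ⟨unitsSet_inv' (hsubset h1'), hc⟩
    have hprod := hC _ hb _ ha
    have e : (a + 1)⁻¹ * a = 1 - (a + 1)⁻¹ := by
      have e2 : (a + 1)⁻¹ * ((a + 1) - 1) = 1 - (a + 1)⁻¹ := by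
        rw [mul_sub, mul_one, inv_mul_cancel₀ ha10]
      rwa [add_sub_cancel_right] at e2
    have : (a + 1)⁻¹ * a ∈ S := by
      have h4 := hnegS (hB _ hb)
      rw [neg_sub] at h4
      rwa [e]
    exact hprod.2 this
  -- U is a group
  have hUmul : ∀ {u v : D}, u ∈ S ∧ u⁻¹ ∈ S → v ∈ S ∧ v⁻¹ ∈ S →
      u * v ∈ S ∧ (u * v)⁻¹ ∈ S := by
    intro u v hu hv
    exact ⟨hmulS hu.1 hv.1, by rw [mul_inv_rev]; exact hmulS hv.2 hu.2⟩
  -- N̄ + U ⊆ U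
  have hAdd : ∀ t ∈ unitsSet N \ S, ∀ u : D, u ∈ S ∧ u⁻¹ ∈ S →
      t + u ∈ S ∧ (t + u)⁻¹ ∈ S := by
    intro t ht u hu
    have hu0 : u ≠ 0 := hne0S hu.1
    have hm : t * u⁻¹ ∈ unitsSet N \ S := by
      refine ⟨unitsSet_mul' ht.1 (unitsSet_inv' (hsubset hu.1)), fun h => ?_⟩
      have h3 := hmulS h hu.1
      rw [mul_assoc, inv_mul_cancel₀ hu0, mul_one] at h3
      exact ht.2 h3
    obtain ⟨hm1', hm2'⟩ := hA _ hm
    have e : (t * u⁻¹ + 1) * u = t + u := by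
      rw [add_mul, one_mul, mul_assoc, inv_mul_cancel₀ hu0, mul_one]
    exact e ▸ hUmul ⟨hm1', hm2'⟩ hu
  -- N̄ closed under negation
  have hnegN : ∀ t ∈ unitsSet N \ S, -t ∈ unitsSet N \ S := by
    intro t ht
    refine ⟨unitsSet_neg' (hsubset hneg1) ht.1, fun h => ?_⟩
    exact ht.2 (neg_neg t ▸ hnegS h)
  -- M elements have inverse in N̄
  have hMinv : ∀ m : D, m ∈ S \ {t : D | t ∈ S ∧ t⁻¹ ∈ S} →
      m⁻¹ ∈ unitsSet N \ S := by
    intro m hm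
    refine ⟨unitsSet_inv' (hsubset hm.1), fun h => ?_⟩
    exact hm.2 ⟨hm.1, h⟩
  refine ⟨?_, ?_, ?_, ?_, ?_⟩
  -- (1)
  · intro t ht
    refine ⟨?_, hInv t ht⟩
    ext u
    constructor
    · rintro ⟨v, hv, rfl⟩
      exact hAdd t ht v hv
    · intro hu
      exact ⟨-t + u, hAdd _ (hnegN t ht) u hu, by
        show t + (-t + u) = u
        rw [add_neg_cancel_left]⟩
  -- (2)
  · intro s hs
    constructor
    · exact fun h => hMinv s h
    · intro h
      have hs0 : s ≠ 0 := unitsSet_ne_zero' hs.1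
      have : s ∈ S := by
        have := hInv _ h
        rwa [inv_inv] at this
      exact ⟨this, hs.2⟩
  -- (3)
  · intro u hu
    have hu' : u ∈ S ∧ u⁻¹ ∈ S := hu
    have huinv : u⁻¹ ∈ S ∧ (u⁻¹)⁻¹ ∈ S := ⟨hu'.2, by rw [inv_inv]; exact hu'.1⟩
    have hu0 : u ≠ 0 := hne0S hu'.1
    have hL : ∀ v : D, (v ∈ S ∧ v⁻¹ ∈ S) → ∀ n ∈ unitsSet N \ S,
        v * n ∈ unitsSet N \ S := by
      intro v hv n hn
      refine ⟨unitsSet_mul' (hsubset hv.1) hn.1, fun h => ?_⟩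
      have h3 := hmulS hv.2 h
      rw [← mul_assoc, inv_mul_cancel₀ (hne0S hv.1), one_mul] at h3
      exact hn.2 h3
    have hR : ∀ v : D, (v ∈ S ∧ v⁻¹ ∈ S) → ∀ n ∈ unitsSet N \ S,
        n * v ∈ unitsSet N \ S := by
      intro v hv n hn
      refine ⟨unitsSet_mul' hn.1 (hsubset hv.1), fun h => ?_⟩
      have h3 := hmulS h hv.2
      rw [mul_assoc, mul_inv_cancel₀ (hne0S hv.1), mul_one] at h3
      exact hn.2 h3
    have hLM : ∀ v : D, (v ∈ S ∧ v⁻¹ ∈ S) →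
        ∀ m ∈ S \ {t : D | t ∈ S ∧ t⁻¹ ∈ S},
        v * m ∈ S \ {t : D | t ∈ S ∧ t⁻¹ ∈ S} := by
      intro v hv m hm
      refine ⟨hmulS hv.1 hm.1, fun h => ?_⟩
      apply hm.2
      have h3 := hUmul ⟨hv.2, by rw [inv_inv]; exact hv.1⟩ h
      rwa [← mul_assoc, inv_mul_cancel₀ (hne0S hv.1), one_mul] at h3
    have hRM : ∀ v : D, (v ∈ S ∧ v⁻¹ ∈ S) →
        ∀ m ∈ S \ {t : D | t ∈ S ∧ t⁻¹ ∈ S},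
        m * v ∈ S \ {t : D | t ∈ S ∧ t⁻¹ ∈ S} := by
      intro v hv m hm
      refine ⟨hmulS hm.1 hv.1, fun h => ?_⟩
      apply hm.2
      have h3 := hUmul h ⟨hv.2, by rw [inv_inv]; exact hv.1⟩
      rwa [mul_assoc, mul_inv_cancel₀ (hne0S hv.1), mul_one] at h3
    refine ⟨?_, ?_, ?_, ?_⟩
    · ext x
      constructor
      · rintro ⟨n, hn, rfl⟩
        exact hL u hu' n hn
      · intro hx
        exact ⟨u⁻¹ * x, hL u⁻¹ huinv x hx, by
          show u * (u⁻¹ * x) = x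
          rw [← mul_assoc, mul_inv_cancel₀ hu0, one_mul]⟩
    · ext x
      constructor
      · rintro ⟨n, hn, rfl⟩
        exact hR u hu' n hn
      · intro hx
        exact ⟨x * u⁻¹, hR u⁻¹ huinv x hx, by
          show x * u⁻¹ * u = x
          rw [mul_assoc, inv_mul_cancel₀ hu0, mul_one]⟩
    · ext x
      constructor
      · rintro ⟨n, hn, rfl⟩
        exact hLM u hu' n hn
      · intro hx
        exact ⟨u⁻¹ * x, hLM u⁻¹ huinv x hx, by
          show u * (u⁻¹ * x) = x
          rw [← mul_assoc, mul_inv_cancel₀ hu0, one_mul]⟩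
    · ext x
      constructor
      · rintro ⟨n, hn, rfl⟩
        exact hRM u hu' n hn
      · intro hx
        exact ⟨x * u⁻¹, hRM u⁻¹ huinv x hx, by
          show x * u⁻¹ * u = x
          rw [mul_assoc, inv_mul_cancel₀ hu0, mul_one]⟩
  -- (4) first part
  · intro x hx
    rw [Set.mem_mul] at hx
    obtain ⟨a, ha, b, hb, rfl⟩ := hx
    exact hC a ha b hb
  -- (4) second part
  · intro x hx
    rw [Set.mem_mul] at hx
    obtain ⟨a, ha, b, hb, rfl⟩ := hx
    refine ⟨hmulS ha.1 hb.1, fun h => ?_⟩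
    have h3 : (a * b)⁻¹ ∈ S := h.2
    rw [mul_inv_rev] at h3
    exact (hC _ (hMinv b hb) _ (hMinv a ha)).2 h3
end
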